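/- arXiv:1101.1533 — 3 statements merged into one kernel-verified Lean document; each statement's English description precedes it below -/
import Mathlib

section
/- Let d ≥ 3, σ_d > 0, and R : ℝ → ℝ Lipschitz with constant L and R(0)=0. Define the operator (T Q)(r) = m r^d + (1/d) ∫₀¹ R(Q'(s) s^{1-d} σ_d^{-1}) s^{1-d} Q(s) G(r,s) ds, where G(r,s) = r^d(1-s^d) for s ≥ r and s^d(1-r^d) for s < r. If |Q|_{2-d} ≤ ρ and |Q'|_{3-d} ≤ ρ (weighted sup norms over (0,1]), then |T Q|_{2-d} ≤ L ρ² /(2 σ_d (d-2)) + m. -/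
open Set MeasureTheory

noncomputable def G (d : ℕ) (r s : ℝ) : ℝ :=
  if s ≥ r then r ^ d * (1 - s ^ d) else s ^ d * (1 - r ^ d)

noncomputable def T (d : ℕ) (m σ : ℝ) (R : ℝ → ℝ) (Q Q' : ℝ → ℝ) (r : ℝ) : ℝ :=
  m * r ^ d +
    (1 / d) * ∫ s in Ioc (0:ℝ) 1,
      R (Q' s * s ^ ((1:ℝ) - d) * σ⁻¹) * s ^ ((1:ℝ) - d) * Q s * G d r s

set_option maxHeartbeats 1000000 in
theorem stmt_5 (d : ℕ) (hd : 3 ≤ d) (m L ρ σ : ℝ) (hm : 0 < m) (hL : 0 ≤ L)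
    (hρ : 0 ≤ ρ) (hσ : 0 < σ)
    (R : ℝ → ℝ) (hRlip : ∀ x y : ℝ, |R x - R y| ≤ L * |x - y|) (hR0 : R 0 = 0)
    (Q Q' : ℝ → ℝ)
    (hQdiff : ∀ r ∈ Ioc (0:ℝ) 1, HasDerivAt Q (Q' r) r)
    (hQcont : ContinuousOn Q' (Ioc (0:ℝ) 1))
    (hQ : ∀ r ∈ Ioc (0:ℝ) 1, |Q r * r ^ ((2:ℝ) - d)| ≤ ρ)
    (hQ' : ∀ r ∈ Ioc (0:ℝ) 1, |Q' r * r ^ ((3:ℝ) - d)| ≤ ρ) :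
    ∀ r ∈ Ioc (0:ℝ) 1,
      |T d m σ R Q Q' r * r ^ ((2:ℝ) - d)| ≤ L * ρ ^ 2 / (2 * σ * (d - 2)) + m := by
  intro r hr
  obtain ⟨hr0, hr1⟩ := hr
  have hd3 : (3:ℝ) ≤ (d:ℝ) := by exact_mod_cast hd
  have hd2 : (0:ℝ) < (d:ℝ) - 2 := by linarith
  have hd0 : (0:ℝ) < (d:ℝ) := by linarith
  have hrp : (0:ℝ) < r ^ ((2:ℝ) - d) := Real.rpow_pos_of_pos hr0 _
  set C : ℝ := L * ρ ^ 2 / σ with hC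
  have hC0 : 0 ≤ C := div_nonneg (mul_nonneg hL (sq_nonneg ρ)) hσ.le
  set g : ℝ → ℝ := fun s =>
    C * (if s ≤ r then s ^ ((d:ℝ) - 3) * r ^ ((2:ℝ) - (d:ℝ)) else s ^ (-3:ℝ) * r ^ (2:ℝ))
    with hgdef
  set f : ℝ → ℝ := fun s =>
    R (Q' s * s ^ ((1:ℝ) - d) * σ⁻¹) * s ^ ((1:ℝ) - d) * Q s * G d r s with hfdef
  have h0mem : (0:ℝ) ∉ Set.uIcc r 1 := by
    rw [Set.uIcc_of_le hr1]
    rintro ⟨h, -⟩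
    linarith
  -- integrability of the pieces of g
  have hint1 : IntegrableOn (fun s : ℝ => s ^ ((d:ℝ) - 3)) (Ioc 0 r) := by
    have h := intervalIntegral.intervalIntegrable_rpow' (a := 0) (b := r)
      (r := (d:ℝ) - 3) (by linarith)
    rw [intervalIntegrable_iff, uIoc_of_le hr0.le] at h
    exact h
  have hint2 : IntegrableOn (fun s : ℝ => s ^ (-3:ℝ)) (Ioc r 1) := by
    have h := intervalIntegral.intervalIntegrable_rpow (a := r) (b := 1)
      (r := (-3:ℝ)) (μ := volume) (Or.inr h0mem)
    rw [intervalIntegrable_iff, uIoc_of_le hr1] at h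
    exact h
  have hEq1 : EqOn (fun s : ℝ => (C * r ^ ((2:ℝ) - (d:ℝ))) * s ^ ((d:ℝ) - 3)) g (Ioc 0 r) := by
    intro s hs
    simp only [hgdef]
    rw [if_pos hs.2]
    ring
  have hEq2 : EqOn (fun s : ℝ => (C * r ^ (2:ℝ)) * s ^ (-3:ℝ)) g (Ioc r 1) := by
    intro s hs
    simp only [hgdef]
    rw [if_neg (not_le.2 hs.1)]
    ring
  have hg1 : IntegrableOn g (Ioc 0 r) :=
    IntegrableOn.congr_fun (hint1.const_mul _) hEq1 measurableSet_Ioc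
  have hg2 : IntegrableOn g (Ioc r 1) :=
    IntegrableOn.congr_fun (hint2.const_mul _) hEq2 measurableSet_Ioc
  have hsplit : Ioc (0:ℝ) 1 = Ioc 0 r ∪ Ioc r 1 := (Ioc_union_Ioc_eq_Ioc hr0.le hr1).symm
  have hgint : IntegrableOn g (Ioc (0:ℝ) 1) := by
    rw [hsplit]; exact hg1.union hg2
  -- value of the integral of g
  have hval1 : ∫ s in Ioc (0:ℝ) r, g s = C / ((d:ℝ) - 2) := by
    rw [← setIntegral_congr_fun measurableSet_Ioc hEq1]
    rw [integral_const_mul, ← intervalIntegral.integral_of_le hr0.le,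
      integral_rpow (Or.inl (by linarith : (-1:ℝ) < (d:ℝ) - 3))]
    have h1 : (d:ℝ) - 3 + 1 = (d:ℝ) - 2 := by ring
    rw [h1, Real.zero_rpow (by linarith : (d:ℝ) - 2 ≠ 0), sub_zero]
    rw [mul_div_assoc', mul_assoc, ← Real.rpow_add hr0]
    have h2 : (2:ℝ) - (d:ℝ) + ((d:ℝ) - 2) = 0 := by ring
    rw [h2, Real.rpow_zero, mul_one]
  have hval2 : ∫ s in Ioc r 1, g s ≤ C / 2 := by
    rw [← setIntegral_congr_fun measurableSet_Ioc hEq2]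
    rw [integral_const_mul, ← intervalIntegral.integral_of_le hr1,
      integral_rpow (Or.inr ⟨by norm_num, h0mem⟩)]
    have h1 : (-3:ℝ) + 1 = -2 := by norm_num
    rw [h1, Real.one_rpow]
    have hinv : r ^ (2:ℝ) * r ^ (-2:ℝ) = 1 := by
      rw [← Real.rpow_add hr0]; norm_num
    have h5 : C * (r ^ (2:ℝ) * r ^ (-2:ℝ)) = C := by rw [hinv, mul_one]
    have hrr0 : 0 ≤ r ^ (2:ℝ) := Real.rpow_nonneg hr0.le _
    have hfinal : C * r ^ (2:ℝ) * ((1 - r ^ (-2:ℝ)) / (-2)) ≤ C / 2 := by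
      nlinarith [h5, mul_nonneg hC0 hrr0]
    refine le_trans (le_of_eq ?_) hfinal
    ring
  have hgval : ∫ s in Ioc (0:ℝ) 1, g s ≤ C / ((d:ℝ) - 2) + C / 2 := by
    rw [hsplit, setIntegral_union (Ioc_disjoint_Ioc_of_le le_rfl) measurableSet_Ioc hg1 hg2, hval1]
    linarith [hval2]
  -- pointwise bound
  have hbound : ∀ s ∈ Ioc (0:ℝ) 1, ‖f s * r ^ ((2:ℝ) - d)‖ ≤ g s := by
    intro s hs
    obtain ⟨hs0, hs1⟩ := hs
    have hsp : ∀ y : ℝ, 0 < s ^ y := fun y => Real.rpow_pos_of_pos hs0 y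
    -- bound on |R x|
    have hx : |R (Q' s * s ^ ((1:ℝ) - d) * σ⁻¹)| ≤ L * ρ / σ * s ^ (-2:ℝ) := by
      have h1 := hRlip (Q' s * s ^ ((1:ℝ) - d) * σ⁻¹) 0
      rw [hR0, sub_zero, sub_zero] at h1
      refine h1.trans ?_
      rw [abs_mul, abs_mul, abs_of_nonneg (hsp _).le, abs_of_nonneg (inv_nonneg.2 hσ.le)]
      have h2 : |Q' s| * s ^ ((1:ℝ) - d) ≤ ρ * s ^ (-2:ℝ) := by
        have h3 := hQ' s ⟨hs0, hs1⟩
        rw [abs_mul, abs_of_nonneg (hsp _).le] at h3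
        have h4 : |Q' s| * s ^ ((1:ℝ) - d)
            = (|Q' s| * s ^ ((3:ℝ) - d)) * s ^ (-2:ℝ) := by
          rw [mul_assoc, ← Real.rpow_add hs0]
          congr 2
          ring
        rw [h4]
        exact mul_le_mul_of_nonneg_right h3 (hsp _).le
      calc L * (|Q' s| * s ^ ((1:ℝ) - d) * σ⁻¹)
          ≤ L * (ρ * s ^ (-2:ℝ) * σ⁻¹) := by
            apply mul_le_mul_of_nonneg_left _ hL
            exact mul_le_mul_of_nonneg_right h2 (inv_nonneg.2 hσ.le)
        _ = L * ρ / σ * s ^ (-2:ℝ) := by field_simp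
    -- bound on s^{1-d} |Q s|
    have hq : s ^ ((1:ℝ) - d) * |Q s| ≤ ρ * s ^ (-1:ℝ) := by
      have h3 := hQ s ⟨hs0, hs1⟩
      rw [abs_mul, abs_of_nonneg (hsp _).le] at h3
      have h4 : s ^ ((1:ℝ) - d) * |Q s|
          = (|Q s| * s ^ ((2:ℝ) - d)) * s ^ (-1:ℝ) := by
        rw [mul_assoc, ← Real.rpow_add hs0]
        rw [mul_comm]
        congr 2
        ring
      rw [h4]
      exact mul_le_mul_of_nonneg_right h3 (hsp _).le
    have hxnn : (0:ℝ) ≤ L * ρ / σ * s ^ (-2:ℝ) :=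
      mul_nonneg (div_nonneg (mul_nonneg hL hρ) hσ.le) (hsp _).le
    have hqnn : (0:ℝ) ≤ s ^ ((1:ℝ) - d) * |Q s| := mul_nonneg (hsp _).le (abs_nonneg _)
    -- bounds on G
    have hsd1 : s ^ d ≤ 1 := pow_le_one₀ hs0.le hs1
    have hrd1 : r ^ d ≤ 1 := pow_le_one₀ hr0.le hr1
    have hsd0 : (0:ℝ) ≤ s ^ d := pow_nonneg hs0.le d
    have hrd0 : (0:ℝ) ≤ r ^ d := pow_nonneg hr0.le d
    have hG0 : 0 ≤ G d r s := by
      unfold G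
      split <;> nlinarith
    have habs : |f s * r ^ ((2:ℝ) - d)|
        = |R (Q' s * s ^ ((1:ℝ) - d) * σ⁻¹)| * (s ^ ((1:ℝ) - d) * |Q s|)
          * (G d r s * r ^ ((2:ℝ) - d)) := by
      simp only [hfdef]
      rw [abs_mul, abs_mul, abs_mul, abs_mul, abs_of_nonneg (hsp _).le,
        abs_of_nonneg hG0, abs_of_nonneg hrp.le]
      ring
    rw [Real.norm_eq_abs, habs]
    by_cases hle : s ≤ r
    · have hGb : G d r s * r ^ ((2:ℝ) - d) ≤ s ^ ((d:ℝ)) * r ^ ((2:ℝ) - (d:ℝ)) := by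
        apply mul_le_mul_of_nonneg_right _ hrp.le
        rw [Real.rpow_natCast s d]
        unfold G
        split <;> rename_i h
        · have hsr : s = r := le_antisymm hle h
          subst hsr
          nlinarith
        · nlinarith
      calc |R (Q' s * s ^ ((1:ℝ) - d) * σ⁻¹)| * (s ^ ((1:ℝ) - d) * |Q s|)
            * (G d r s * r ^ ((2:ℝ) - d))
          ≤ (L * ρ / σ * s ^ (-2:ℝ)) * (ρ * s ^ (-1:ℝ))
            * (s ^ ((d:ℝ)) * r ^ ((2:ℝ) - (d:ℝ))) := by
            apply mul_le_mul (mul_le_mul hx hq hqnn hxnn) hGb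
              (mul_nonneg hG0 hrp.le)
              (mul_nonneg hxnn (mul_nonneg hρ (hsp _).le))
        _ = g s := by
            simp only [hgdef]
            rw [if_pos hle]
            have he : s ^ ((d:ℝ) - 3) = s ^ (-2:ℝ) * s ^ (-1:ℝ) * s ^ ((d:ℝ)) := by
              rw [← Real.rpow_add hs0, ← Real.rpow_add hs0]
              congr 1
              ring
            rw [hC, he]
            ring
    · push_neg at hle
      have hGb : G d r s * r ^ ((2:ℝ) - d) ≤ r ^ (2:ℝ) := by
        have hGr : G d r s ≤ r ^ ((d:ℝ)) := by
          rw [Real.rpow_natCast r d]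
          unfold G
          rw [if_pos (le_of_lt hle : r ≤ s)]
          nlinarith
        calc G d r s * r ^ ((2:ℝ) - d) ≤ r ^ ((d:ℝ)) * r ^ ((2:ℝ) - (d:ℝ)) :=
              mul_le_mul_of_nonneg_right hGr hrp.le
          _ = r ^ (2:ℝ) := by
              rw [← Real.rpow_add hr0]
              congr 1
              ring
      calc |R (Q' s * s ^ ((1:ℝ) - d) * σ⁻¹)| * (s ^ ((1:ℝ) - d) * |Q s|)
            * (G d r s * r ^ ((2:ℝ) - d))
          ≤ (L * ρ / σ * s ^ (-2:ℝ)) * (ρ * s ^ (-1:ℝ)) * (r ^ (2:ℝ)) := by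
            apply mul_le_mul (mul_le_mul hx hq hqnn hxnn) hGb
              (mul_nonneg hG0 hrp.le)
              (mul_nonneg hxnn (mul_nonneg hρ (hsp _).le))
        _ = g s := by
            simp only [hgdef]
            rw [if_neg (not_le.2 hle)]
            have he : s ^ (-3:ℝ) = s ^ (-2:ℝ) * s ^ (-1:ℝ) := by
              rw [← Real.rpow_add hs0]
              norm_num
            rw [hC, he]
            ring
  -- main integral bound
  have hmain : |∫ s in Ioc (0:ℝ) 1, f s * r ^ ((2:ℝ) - d)| ≤ C / ((d:ℝ) - 2) + C / 2 := by
    have h := norm_integral_le_of_norm_le (μ := volume.restrict (Ioc (0:ℝ) 1)) hgint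
      (ae_restrict_of_forall_mem measurableSet_Ioc hbound)
    rw [Real.norm_eq_abs] at h
    exact h.trans hgval
  -- assemble
  have hT : T d m σ R Q Q' r * r ^ ((2:ℝ) - d)
      = m * r ^ d * r ^ ((2:ℝ) - d)
        + (1 / d) * ∫ s in Ioc (0:ℝ) 1, f s * r ^ ((2:ℝ) - d) := by
    rw [integral_mul_const]
    simp only [T, hfdef]
    ring
  rw [hT]
  have h1 : |m * r ^ d * r ^ ((2:ℝ) - d)| ≤ m := by
    have hrd : (r:ℝ) ^ d * r ^ ((2:ℝ) - d) = r ^ (2:ℝ) := by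
      rw [← Real.rpow_natCast r d, ← Real.rpow_add hr0]
      congr 1
      ring
    rw [mul_assoc, hrd, abs_of_nonneg (by positivity)]
    have hrr : r ^ (2:ℝ) ≤ 1 := by
      calc r ^ (2:ℝ) ≤ 1 ^ (2:ℝ) := Real.rpow_le_rpow hr0.le hr1 (by norm_num)
        _ = 1 := Real.one_rpow _
    nlinarith
  have h2 : |(1 / (d:ℝ)) * ∫ s in Ioc (0:ℝ) 1, f s * r ^ ((2:ℝ) - d)|
      ≤ L * ρ ^ 2 / (2 * σ * ((d:ℝ) - 2)) := by
    rw [abs_mul, abs_of_nonneg (by positivity : (0:ℝ) ≤ 1 / (d:ℝ))]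
    calc (1 / (d:ℝ)) * |∫ s in Ioc (0:ℝ) 1, f s * r ^ ((2:ℝ) - d)|
        ≤ (1 / (d:ℝ)) * (C / ((d:ℝ) - 2) + C / 2) := by
          apply mul_le_mul_of_nonneg_left hmain (by positivity)
      _ = L * ρ ^ 2 / (2 * σ * ((d:ℝ) - 2)) := by
          rw [hC]
          field_simp
          ring
  calc |m * r ^ d * r ^ ((2:ℝ) - d)
        + (1 / (d:ℝ)) * ∫ s in Ioc (0:ℝ) 1, f s * r ^ ((2:ℝ) - d)|
      ≤ |m * r ^ d * r ^ ((2:ℝ) - d)|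
        + |(1 / (d:ℝ)) * ∫ s in Ioc (0:ℝ) 1, f s * r ^ ((2:ℝ) - d)| := abs_add_le _ _
    _ ≤ m + L * ρ ^ 2 / (2 * σ * ((d:ℝ) - 2)) := add_le_add h1 h2
    _ = L * ρ ^ 2 / (2 * σ * ((d:ℝ) - 2)) + m := by ring
end

section
/- Under the same hypotheses (d ≥ 3, R Lipschitz with constant L, R(0)=0, |Q|_{2-d} ≤ ρ, |Q'|_{3-d} ≤ ρ), the derivative of the operator T Q satisfies the weighted bound |(T Q)'|_{3-d} ≤ L(d+4) ρ² /(2 σ_d (d-2)) + m d. -/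
open Set MeasureTheory

/-- The kernel function. -/
noncomputable def Kf (d : ℕ) (σ : ℝ) (R Q Q' : ℝ → ℝ) (s : ℝ) : ℝ :=
  R (Q' s * s ^ ((1:ℝ) - d) * σ⁻¹) * s ^ ((1:ℝ) - d) * Q s

noncomputable def gf (d : ℕ) (σ : ℝ) (R Q Q' : ℝ → ℝ) (s : ℝ) : ℝ :=
  Kf d σ R Q Q' s * s ^ d

noncomputable def hf (d : ℕ) (σ : ℝ) (R Q Q' : ℝ → ℝ) (s : ℝ) : ℝ :=
  Kf d σ R Q Q' s * (1 - s ^ d)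

noncomputable def Bf (d : ℕ) (σ : ℝ) (R Q Q' : ℝ → ℝ) (x : ℝ) : ℝ :=
  ∫ s in Ioc (0:ℝ) x, gf d σ R Q Q' s

noncomputable def Af (d : ℕ) (σ : ℝ) (R Q Q' : ℝ → ℝ) (x : ℝ) : ℝ :=
  ∫ s in Ioc x 1, hf d σ R Q Q' s

set_option maxHeartbeats 2000000 in
theorem stmt_6 (d : ℕ) (hd : 3 ≤ d) (m L ρ σ : ℝ) (hm : 0 < m) (hL : 0 ≤ L)
    (hρ : 0 ≤ ρ) (hσ : 0 < σ)
    (R : ℝ → ℝ) (hRlip : ∀ x y : ℝ, |R x - R y| ≤ L * |x - y|) (hR0 : R 0 = 0)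
    (Q Q' D : ℝ → ℝ)
    (hQdiff : ∀ r ∈ Ioc (0:ℝ) 1, HasDerivAt Q (Q' r) r)
    (hQcont : ContinuousOn Q' (Ioc (0:ℝ) 1))
    (hQ : ∀ r ∈ Ioc (0:ℝ) 1, |Q r * r ^ ((2:ℝ) - d)| ≤ ρ)
    (hQ' : ∀ r ∈ Ioc (0:ℝ) 1, |Q' r * r ^ ((3:ℝ) - d)| ≤ ρ)
    (hTdiff : ∀ r ∈ Ioc (0:ℝ) 1, HasDerivAt (T d m σ R Q Q') (D r) r) :
    ∀ r ∈ Ioc (0:ℝ) 1,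
      |D r * r ^ ((3:ℝ) - d)| ≤ L * (d + 4) * ρ ^ 2 / (2 * σ * (d - 2)) + m * d := by
  intro r hr
  obtain ⟨hr0, hr1⟩ := hr
  have hd3 : (3:ℝ) ≤ (d:ℝ) := by exact_mod_cast hd
  have hdpos : (0:ℝ) < (d:ℝ) := by linarith
  set C : ℝ := L * ρ ^ 2 / σ with hCdef
  have hC0 : 0 ≤ C := by positivity
  set K := Kf d σ R Q Q' with hKdef
  set g := gf d σ R Q Q' with hgdef
  set h := hf d σ R Q Q' with hhdef
  set B := Bf d σ R Q Q' with hBdef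
  set A := Af d σ R Q Q' with hAdef
  -- continuity facts
  have hRc : Continuous R := by
    have : LipschitzWith (Real.toNNReal L) R := by
      apply LipschitzWith.of_dist_le_mul
      intro x y
      rw [Real.dist_eq, Real.dist_eq]
      calc |R x - R y| ≤ L * |x - y| := hRlip x y
        _ = (Real.toNNReal L) * |x - y| := by rw [Real.coe_toNNReal L hL]
    exact this.continuous
  have hQc : ContinuousOn Q (Ioc (0:ℝ) 1) := fun s hs =>
    ((hQdiff s hs).continuousAt).continuousWithinAt
  have hpowc : ContinuousOn (fun s : ℝ => s ^ ((1:ℝ) - d)) (Ioc (0:ℝ) 1) := fun s hs =>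
    (Real.continuousAt_rpow_const s _ (Or.inl (ne_of_gt hs.1))).continuousWithinAt
  have hKc : ContinuousOn K (Ioc (0:ℝ) 1) := by
    rw [hKdef]
    exact ((hRc.comp_continuousOn ((hQcont.mul hpowc).mul continuousOn_const)).mul hpowc).mul hQc
  have hgc : ContinuousOn g (Ioc (0:ℝ) 1) := by
    rw [hgdef]; exact hKc.mul (continuous_pow d).continuousOn
  have hhc : ContinuousOn h (Ioc (0:ℝ) 1) := by
    rw [hhdef]; exact hKc.mul (continuousOn_const.sub (continuous_pow d).continuousOn)
  -- bound on K
  have hKb : ∀ s ∈ Ioc (0:ℝ) 1, |K s| ≤ C * s ^ (-3:ℝ) := by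
    intro s hs
    have hs0 : 0 < s := hs.1
    have hsp : ∀ p : ℝ, (0:ℝ) < s ^ p := fun p => Real.rpow_pos_of_pos hs0 p
    have hQ's : |Q' s| * s ^ ((3:ℝ) - d) ≤ ρ := by
      have := hQ' s hs; rwa [abs_mul, abs_of_pos (hsp _)] at this
    have hQs : |Q s| * s ^ ((2:ℝ) - d) ≤ ρ := by
      have := hQ s hs; rwa [abs_mul, abs_of_pos (hsp _)] at this
    have e1 : |Q' s| ≤ ρ * s ^ ((d:ℝ) - 3) := by
      have h2 := mul_le_mul_of_nonneg_right hQ's (le_of_lt (hsp ((d:ℝ) - 3)))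
      rwa [mul_assoc, ← Real.rpow_add hs0, show (3:ℝ) - d + ((d:ℝ) - 3) = 0 by ring,
        Real.rpow_zero, mul_one] at h2
    have e2 : |Q s| ≤ ρ * s ^ ((d:ℝ) - 2) := by
      have h2 := mul_le_mul_of_nonneg_right hQs (le_of_lt (hsp ((d:ℝ) - 2)))
      rwa [mul_assoc, ← Real.rpow_add hs0, show (2:ℝ) - d + ((d:ℝ) - 2) = 0 by ring,
        Real.rpow_zero, mul_one] at h2
    have hRb : |R (Q' s * s ^ ((1:ℝ) - d) * σ⁻¹)| ≤ L * (|Q' s| * s ^ ((1:ℝ) - d) * σ⁻¹) := by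
      have h0 := hRlip (Q' s * s ^ ((1:ℝ) - d) * σ⁻¹) 0
      rw [hR0, sub_zero, sub_zero] at h0
      calc |R (Q' s * s ^ ((1:ℝ) - d) * σ⁻¹)| ≤ L * |Q' s * s ^ ((1:ℝ) - d) * σ⁻¹| := h0
        _ = L * (|Q' s| * s ^ ((1:ℝ) - d) * σ⁻¹) := by
            rw [abs_mul, abs_mul, abs_of_pos (hsp _), abs_of_pos (inv_pos.2 hσ)]
    have hKabs : |K s| = |R (Q' s * s ^ ((1:ℝ) - d) * σ⁻¹)| * s ^ ((1:ℝ) - d) * |Q s| := by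
      rw [hKdef]
      simp only [Kf]
      rw [abs_mul, abs_mul, abs_of_pos (hsp _)]
    rw [hKabs]
    have step1 : |R (Q' s * s ^ ((1:ℝ) - d) * σ⁻¹)| * s ^ ((1:ℝ) - d) * |Q s|
        ≤ (L * ((ρ * s ^ ((d:ℝ) - 3)) * s ^ ((1:ℝ) - d) * σ⁻¹)) * s ^ ((1:ℝ) - d)
          * (ρ * s ^ ((d:ℝ) - 2)) := by
      have hRb2 : |R (Q' s * s ^ ((1:ℝ) - d) * σ⁻¹)|
          ≤ L * ((ρ * s ^ ((d:ℝ) - 3)) * s ^ ((1:ℝ) - d) * σ⁻¹) := by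
        refine hRb.trans ?_
        gcongr
      have hm1 : |R (Q' s * s ^ ((1:ℝ) - d) * σ⁻¹)| * s ^ ((1:ℝ) - d)
          ≤ (L * ((ρ * s ^ ((d:ℝ) - 3)) * s ^ ((1:ℝ) - d) * σ⁻¹)) * s ^ ((1:ℝ) - d) :=
        mul_le_mul_of_nonneg_right hRb2 (hsp _).le
      exact mul_le_mul hm1 e2 (abs_nonneg _) (by positivity)
    refine step1.trans (le_of_eq ?_)
    have hcomb : s ^ ((d:ℝ) - 3) * s ^ ((1:ℝ) - d) * s ^ ((1:ℝ) - d) * s ^ ((d:ℝ) - 2)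
        = s ^ (-3:ℝ) := by
      rw [← Real.rpow_add hs0, ← Real.rpow_add hs0, ← Real.rpow_add hs0]
      congr 1; ring
    calc (L * ((ρ * s ^ ((d:ℝ) - 3)) * s ^ ((1:ℝ) - d) * σ⁻¹)) * s ^ ((1:ℝ) - d)
          * (ρ * s ^ ((d:ℝ) - 2))
        = C * (s ^ ((d:ℝ) - 3) * s ^ ((1:ℝ) - d) * s ^ ((1:ℝ) - d) * s ^ ((d:ℝ) - 2)) := by
          rw [hCdef]; field_simp
      _ = C * s ^ (-3:ℝ) := by rw [hcomb]
  -- bounds on g and h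
  have hgb : ∀ s ∈ Ioc (0:ℝ) 1, |g s| ≤ C * s ^ ((d:ℝ) - 3) := by
    intro s hs
    have hs0 : 0 < s := hs.1
    have : |g s| = |K s| * s ^ ((d:ℝ)) := by
      rw [hgdef]; simp only [gf]
      rw [abs_mul, abs_of_pos (pow_pos hs0 d), ← Real.rpow_natCast s d]
    rw [this]
    calc |K s| * s ^ ((d:ℝ)) ≤ (C * s ^ (-3:ℝ)) * s ^ ((d:ℝ)) :=
          mul_le_mul_of_nonneg_right (hKb s hs) (Real.rpow_pos_of_pos hs0 _).le
      _ = C * s ^ ((d:ℝ) - 3) := by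
          rw [mul_assoc, ← Real.rpow_add hs0]
          congr 2
          ring
  have hgb1 : ∀ s ∈ Ioc (0:ℝ) 1, |g s| ≤ C := by
    intro s hs
    refine (hgb s hs).trans ?_
    calc C * s ^ ((d:ℝ) - 3) ≤ C * 1 := by
          gcongr
          exact Real.rpow_le_one hs.1.le hs.2 (by linarith)
      _ = C := mul_one C
  have hhb : ∀ s ∈ Ioc (0:ℝ) 1, |h s| ≤ C * s ^ (-3:ℝ) := by
    intro s hs
    have hsd : 0 ≤ 1 - s ^ d := by
      have : s ^ d ≤ 1 := pow_le_one₀ hs.1.le hs.2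
      linarith
    have hsd1 : 1 - s ^ d ≤ 1 := by
      have : 0 ≤ s ^ d := pow_nonneg hs.1.le d
      linarith
    have : |h s| = |K s| * (1 - s ^ d) := by
      rw [hhdef]; simp only [hf]; rw [abs_mul, abs_of_nonneg hsd]
    rw [this]
    calc |K s| * (1 - s ^ d) ≤ (C * s ^ (-3:ℝ)) * 1 :=
          mul_le_mul (hKb s hs) hsd1 hsd (mul_nonneg hC0 (Real.rpow_pos_of_pos hs.1 _).le)
      _ = C * s ^ (-3:ℝ) := mul_one _
  -- integrability
  have hIoc01 : Ioc (0:ℝ) r ⊆ Ioc (0:ℝ) 1 := Ioc_subset_Ioc_right hr1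
  have hgint : IntegrableOn g (Ioc (0:ℝ) 1) := by
    refine Integrable.mono'
      ((integrableOn_const measure_Ioc_lt_top.ne) :
        IntegrableOn (fun _ : ℝ => C) (Ioc (0:ℝ) 1) volume)
      (hgc.aestronglyMeasurable measurableSet_Ioc) ?_
    filter_upwards [ae_restrict_mem measurableSet_Ioc] with s hs
    exact hgb1 s hs
  have hhint : ∀ x : ℝ, 0 < x → IntegrableOn h (Ioc x 1) := by
    intro x hx
    have hsub : Icc x 1 ⊆ Ioc (0:ℝ) 1 := fun s hs => ⟨lt_of_lt_of_le hx hs.1, hs.2⟩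
    exact ((hhc.mono hsub).integrableOn_Icc).mono_set Ioc_subset_Icc_self
  -- the splitting identity
  have hsplit : ∀ x ∈ Ioc (0:ℝ) 1,
      T d m σ R Q Q' x = m * x ^ d + (1 / d) * ((1 - x ^ d) * B x + x ^ d * A x) := by
    intro x hx
    obtain ⟨hx0, hx1⟩ := hx
    have hunion : Ioc (0:ℝ) x ∪ Ioc x 1 = Ioc (0:ℝ) 1 := Ioc_union_Ioc_eq_Ioc hx0.le hx1
    have e1 : EqOn (fun s => K s * G d x s) (fun s => g s * (1 - x ^ d)) (Ioc (0:ℝ) x) := by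
      intro s hs
      simp only [hgdef, gf, ← hKdef, G]
      by_cases hsx : s ≥ x
      · have hsx' : s = x := le_antisymm hs.2 hsx
        subst hsx'
        rw [if_pos le_rfl]; ring
      · rw [if_neg hsx]; ring
    have e2 : EqOn (fun s => K s * G d x s) (fun s => h s * x ^ d) (Ioc x 1) := by
      intro s hs
      simp only [hhdef, hf, ← hKdef, G]
      rw [if_pos (le_of_lt hs.1)]; ring
    have hf1 : IntegrableOn (fun s => K s * G d x s) (Ioc (0:ℝ) x) := by
      refine IntegrableOn.congr_fun ?_ e1.symm measurableSet_Ioc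
      exact (hgint.mono_set (Ioc_subset_Ioc_right hx1)).mul_const _
    have hf2 : IntegrableOn (fun s => K s * G d x s) (Ioc x 1) := by
      refine IntegrableOn.congr_fun ?_ e2.symm measurableSet_Ioc
      exact (hhint x hx0).mul_const _
    have hTsplit : (∫ s in Ioc (0:ℝ) 1, K s * G d x s)
        = (∫ s in Ioc (0:ℝ) x, K s * G d x s) + ∫ s in Ioc x 1, K s * G d x s := by
      rw [← hunion, setIntegral_union (Ioc_disjoint_Ioc_of_le le_rfl) measurableSet_Ioc hf1 hf2]
    have hI1 : (∫ s in Ioc (0:ℝ) x, K s * G d x s) = (1 - x ^ d) * B x := by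
      rw [setIntegral_congr_fun measurableSet_Ioc e1, integral_mul_const, mul_comm]
      rfl
    have hI2 : (∫ s in Ioc x 1, K s * G d x s) = x ^ d * A x := by
      rw [setIntegral_congr_fun measurableSet_Ioc e2, integral_mul_const, mul_comm]
      rfl
    have hTK : T d m σ R Q Q' x
        = m * x ^ d + (1 / d) * ∫ s in Ioc (0:ℝ) 1, K s * G d x s := by
      simp only [T, hKdef, Kf]
    rw [hTK, hTsplit, hI1, hI2]
  -- derivatives of B and A within S = Ioc 0 r
  set S := Ioc (0:ℝ) r with hSdef
  have hrS : r ∈ S := ⟨hr0, le_refl r⟩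
  have hSsub : S ⊆ Ioc (0:ℝ) 1 := hIoc01
  have hmemS : S ∈ nhdsWithin r (Iic r) := by
    have h1 : Iic r ∩ Ioi (0:ℝ) ∈ nhdsWithin r (Iic r) :=
      inter_mem_nhdsWithin _ (Ioi_mem_nhds hr0)
    have h2 : Iic r ∩ Ioi (0:ℝ) = S := by
      rw [inter_comm, Ioi_inter_Iic]
    rwa [h2] at h1
  have hg01 : Ioc (0:ℝ) 1 ∈ nhdsWithin r (Iic r) := Filter.mem_of_superset hmemS hSsub
  have hBderiv : HasDerivWithinAt B (g r) S r := by
    have hgiv : IntervalIntegrable g volume 0 r :=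
      (intervalIntegrable_iff_integrableOn_Ioc_of_le hr0.le).2 (hgint.mono_set hSsub)
    have hgm : StronglyMeasurableAtFilter g (nhdsWithin r (Iic r)) :=
      ⟨Ioc (0:ℝ) 1, hg01, hgc.aestronglyMeasurable measurableSet_Ioc⟩
    have hgcw : ContinuousWithinAt g (Iic r) r :=
      (hgc r ⟨hr0, hr1⟩).mono_of_mem_nhdsWithin hg01
    have h1 : HasDerivWithinAt (fun u => ∫ x in (0:ℝ)..u, g x) (g r) (Iic r) r :=
      intervalIntegral.integral_hasDerivWithinAt_right hgiv hgm hgcw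
    refine (h1.mono Ioc_subset_Iic_self).congr (fun u hu => ?_) ?_
    · rw [hBdef]
      simp only [Bf]
      rw [intervalIntegral.integral_of_le hu.1.le]
    · rw [hBdef]
      simp only [Bf]
      rw [intervalIntegral.integral_of_le hr0.le]
  have hAderiv : HasDerivWithinAt A (-(h r)) S r := by
    have hhiv : IntervalIntegrable h volume r 1 :=
      (intervalIntegrable_iff_integrableOn_Ioc_of_le hr1).2 (hhint r hr0)
    have hhm : StronglyMeasurableAtFilter h (nhdsWithin r (Iic r)) :=
      ⟨Ioc (0:ℝ) 1, hg01, hhc.aestronglyMeasurable measurableSet_Ioc⟩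
    have hhcw : ContinuousWithinAt h (Iic r) r :=
      (hhc r ⟨hr0, hr1⟩).mono_of_mem_nhdsWithin hg01
    have h1 : HasDerivWithinAt (fun u => ∫ x in u..(1:ℝ), h x) (-(h r)) (Iic r) r :=
      intervalIntegral.integral_hasDerivWithinAt_left hhiv hhm hhcw
    refine (h1.mono Ioc_subset_Iic_self).congr (fun u hu => ?_) ?_
    · rw [hAdef]
      simp only [Af]
      rw [intervalIntegral.integral_of_le (hu.2.trans hr1)]
    · rw [hAdef]
      simp only [Af]
      rw [intervalIntegral.integral_of_le hr1]
  -- derivative of the formula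
  have hpowd : HasDerivWithinAt (fun x : ℝ => x ^ d) ((d:ℝ) * r ^ (d - 1)) S r :=
    (hasDerivAt_pow d r).hasDerivWithinAt
  set V : ℝ := r ^ (d - 1) * ((m * d) + (A r - B r)) with hVdef
  have hφ : HasDerivWithinAt
      (fun x => m * x ^ d + (1 / d) * ((1 - x ^ d) * B x + x ^ d * A x)) V S r := by
    have h1 : HasDerivWithinAt
        (fun x => m * x ^ d + (1 / d) * ((1 - x ^ d) * B x + x ^ d * A x))
        (m * ((d:ℝ) * r ^ (d - 1)) + ((1:ℝ) / d) *
          (((0 - (d:ℝ) * r ^ (d - 1)) * B r + (1 - r ^ d) * g r)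
            + ((d:ℝ) * r ^ (d - 1) * A r + r ^ d * (-(h r))))) S r := by
      exact (hpowd.const_mul m).add
        (((((hasDerivWithinAt_const r S (1:ℝ)).sub hpowd).mul hBderiv).add
          (hpowd.mul hAderiv)).const_mul ((1:ℝ) / d))
    convert h1 using 1
    have hgr : g r = K r * r ^ d := rfl
    have hhr : h r = K r * (1 - r ^ d) := rfl
    rw [hVdef, hgr, hhr]
    field_simp
    ring
  -- identify D r with V
  have hTW : HasDerivWithinAt (T d m σ R Q Q') V S r :=
    hφ.congr (fun x hx => hsplit x (hSsub hx)) (hsplit r ⟨hr0, hr1⟩)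
  have hUD : UniqueDiffWithinAt ℝ S r := uniqueDiffOn_Ioc 0 r r hrS
  have hDr : D r = V := by
    have h1 := ((hTdiff r ⟨hr0, hr1⟩).hasDerivWithinAt (s := S)).derivWithin hUD
    have h2 := hTW.derivWithin hUD
    rw [← h1, ← h2]
  -- bounds on A r and B r
  have hBbound : |B r| ≤ C * r ^ ((d:ℝ) - 2) / ((d:ℝ) - 2) := by
    have hdom : IntegrableOn (fun s : ℝ => C * s ^ ((d:ℝ) - 3)) S := by
      refine Integrable.mono'
        ((integrableOn_const measure_Ioc_lt_top.ne) :
          IntegrableOn (fun _ : ℝ => C) S volume)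
        (((measurable_id.pow_const _).const_mul C).aestronglyMeasurable) ?_
      filter_upwards [ae_restrict_mem measurableSet_Ioc] with s hs
      have hs01 : s ∈ Ioc (0:ℝ) 1 := hSsub hs
      rw [Real.norm_eq_abs, abs_mul, abs_of_nonneg hC0,
        abs_of_pos (Real.rpow_pos_of_pos hs01.1 _)]
      calc C * s ^ ((d:ℝ) - 3) ≤ C * 1 := by
            gcongr
            exact Real.rpow_le_one hs01.1.le hs01.2 (by linarith)
        _ = C := mul_one C
    have h1 : |B r| ≤ ∫ s in S, |g s| := by
      rw [hBdef]
      show |∫ s in S, g s| ≤ _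
      simpa [Real.norm_eq_abs] using
        norm_integral_le_integral_norm (μ := volume.restrict S) (f := g)
    have h2 : (∫ s in S, |g s|) ≤ ∫ s in S, C * s ^ ((d:ℝ) - 3) := by
      refine setIntegral_mono_on ((hgint.mono_set hSsub).abs) hdom measurableSet_Ioc ?_
      intro s hs
      exact hgb s (hSsub hs)
    have h3 : (∫ s in S, C * s ^ ((d:ℝ) - 3)) = C * r ^ ((d:ℝ) - 2) / ((d:ℝ) - 2) := by
      rw [hSdef, integral_const_mul, ← intervalIntegral.integral_of_le hr0.le,
        integral_rpow (Or.inl (by linarith : (-1:ℝ) < (d:ℝ) - 3))]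
      rw [Real.zero_rpow (by intro hcon; rw [show (d:ℝ) - 3 + 1 = (d:ℝ) - 2 by ring] at hcon; linarith [hcon])]
      rw [show (d:ℝ) - 3 + 1 = (d:ℝ) - 2 by ring]
      field_simp
      rw [sub_zero]
    linarith [h1.trans h2, le_of_eq h3]
  have hAbound : |A r| ≤ C * (r ^ (-2:ℝ) - 1) / 2 := by
    have hdom : IntegrableOn (fun s : ℝ => C * s ^ (-3:ℝ)) (Ioc r 1) := by
      have hcont : ContinuousOn (fun s : ℝ => C * s ^ (-3:ℝ)) (Icc r 1) := by
        refine continuousOn_const.mul (fun s hs => ?_)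
        exact (Real.continuousAt_rpow_const s _
          (Or.inl (ne_of_gt (lt_of_lt_of_le hr0 hs.1)))).continuousWithinAt
      exact (hcont.integrableOn_Icc).mono_set Ioc_subset_Icc_self
    have h1 : |A r| ≤ ∫ s in Ioc r 1, |h s| := by
      rw [hAdef]
      show |∫ s in Ioc r 1, h s| ≤ _
      simpa [Real.norm_eq_abs] using
        norm_integral_le_integral_norm (μ := volume.restrict (Ioc r 1)) (f := h)
    have h2 : (∫ s in Ioc r 1, |h s|) ≤ ∫ s in Ioc r 1, C * s ^ (-3:ℝ) := by
      refine setIntegral_mono_on ((hhint r hr0).abs) hdom measurableSet_Ioc ?_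
      intro s hs
      exact hhb s ⟨lt_trans hr0 hs.1, hs.2⟩
    have h3 : (∫ s in Ioc r 1, C * s ^ (-3:ℝ)) = C * (r ^ (-2:ℝ) - 1) / 2 := by
      rw [integral_const_mul, ← intervalIntegral.integral_of_le hr1,
        integral_rpow (Or.inr ⟨by norm_num, fun hcon => ?_⟩)]
      · rw [show (-3:ℝ) + 1 = -2 by ring]
        rw [Real.one_rpow]
        field_simp
        ring
      · rcases hcon with ⟨ha, _⟩
        simp only [inf_le_iff] at ha
        rcases ha with ha | ha
        · linarith
        · linarith
    linarith [h1.trans h2, le_of_eq h3]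
  -- final arithmetic
  rw [hDr]
  have hr3d : (0:ℝ) < r ^ ((3:ℝ) - d) := Real.rpow_pos_of_pos hr0 _
  rw [abs_mul, abs_of_pos hr3d]
  have hrp : (0:ℝ) ≤ r ^ (d - 1) := pow_nonneg hr0.le _
  have hVabs : |V| ≤ r ^ (d - 1) * (m * d + (|A r| + |B r|)) := by
    rw [hVdef, abs_mul, abs_of_nonneg hrp]
    gcongr
    calc |m * (d:ℝ) + (A r - B r)| ≤ |m * (d:ℝ)| + |A r - B r| := abs_add_le _ _
      _ ≤ m * d + (|A r| + |B r|) := by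
          rw [abs_of_nonneg (by positivity : (0:ℝ) ≤ m * (d:ℝ))]
          gcongr
          exact abs_sub _ _
  have hpow2 : r ^ (d - 1) * r ^ ((3:ℝ) - d) = r ^ (2:ℝ) := by
    rw [← Real.rpow_natCast r (d - 1), ← Real.rpow_add hr0]
    congr 1
    have hcast : ((d - 1 : ℕ) : ℝ) = (d:ℝ) - 1 := by
      have h1 : (1:ℕ) ≤ d := by omega
      push_cast [Nat.cast_sub h1]
      ring
    rw [hcast]; ring
  have hx2pos : (0:ℝ) < r ^ (2:ℝ) := Real.rpow_pos_of_pos hr0 _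
  have hx2le : r ^ (2:ℝ) ≤ 1 := Real.rpow_le_one hr0.le hr1 (by norm_num)
  have hx2inv : r ^ (2:ℝ) * r ^ (-2:ℝ) = 1 := by
    rw [← Real.rpow_add hr0]; norm_num
  have hxd2 : (0:ℝ) ≤ r ^ ((d:ℝ) - 2) := (Real.rpow_pos_of_pos hr0 _).le
  have hx2xd2 : r ^ (2:ℝ) * r ^ ((d:ℝ) - 2) ≤ 1 := by
    rw [← Real.rpow_add hr0, show (2:ℝ) + ((d:ℝ) - 2) = (d:ℝ) by ring]
    exact Real.rpow_le_one hr0.le hr1 (by linarith)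
  have hd2pos : (0:ℝ) < (d:ℝ) - 2 := by linarith
  calc |V| * r ^ ((3:ℝ) - d)
      ≤ (r ^ (d - 1) * (m * d + (|A r| + |B r|))) * r ^ ((3:ℝ) - d) :=
        mul_le_mul_of_nonneg_right hVabs hr3d.le
    _ = r ^ (2:ℝ) * (m * d + (|A r| + |B r|)) := by
        rw [mul_comm (r ^ (d - 1)) _, mul_assoc, hpow2]; ring
    _ ≤ r ^ (2:ℝ) * (m * d + (C * (r ^ (-2:ℝ) - 1) / 2 + C * r ^ ((d:ℝ) - 2) / ((d:ℝ) - 2))) := by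
        gcongr
    _ = r ^ (2:ℝ) * (m * d) + C * (r ^ (2:ℝ) * r ^ (-2:ℝ) - r ^ (2:ℝ)) / 2
        + C * (r ^ (2:ℝ) * r ^ ((d:ℝ) - 2)) / ((d:ℝ) - 2) := by ring
    _ ≤ 1 * (m * d) + C * (1 - 0) / 2 + C * 1 / ((d:ℝ) - 2) := by
        have t1 : r ^ (2:ℝ) * (m * d) ≤ 1 * (m * d) :=
          mul_le_mul_of_nonneg_right hx2le (by positivity)
        have t2 : C * (r ^ (2:ℝ) * r ^ (-2:ℝ) - r ^ (2:ℝ)) / 2 ≤ C * (1 - 0) / 2 := by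
          rw [hx2inv]
          nlinarith [mul_nonneg hC0 hx2pos.le]
        have t3 : C * (r ^ (2:ℝ) * r ^ ((d:ℝ) - 2)) / ((d:ℝ) - 2) ≤ C * 1 / ((d:ℝ) - 2) :=
          (div_le_div_iff_of_pos_right hd2pos).2 (mul_le_mul_of_nonneg_left hx2xd2 hC0)
        linarith
    _ = m * d + (C / 2 + C / ((d:ℝ) - 2)) := by ring
    _ ≤ L * (d + 4) * ρ ^ 2 / (2 * σ * (d - 2)) + m * d := by
        have hCd : C / 2 + C / ((d:ℝ) - 2) = C * (d:ℝ) / (2 * ((d:ℝ) - 2)) := by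
          field_simp
          ring
        have hRHS : L * ((d:ℝ) + 4) * ρ ^ 2 / (2 * σ * ((d:ℝ) - 2))
            = C * ((d:ℝ) + 4) / (2 * ((d:ℝ) - 2)) := by
          rw [hCdef]
          field_simp
        have key : C * (d:ℝ) / (2 * ((d:ℝ) - 2)) ≤ C * ((d:ℝ) + 4) / (2 * ((d:ℝ) - 2)) :=
          (div_le_div_iff_of_pos_right (by positivity)).2
            (mul_le_mul_of_nonneg_left (by linarith) hC0)
        rw [← hRHS] at key
        rw [hCd]
        linarith
end

section
/- Let d ≥ 3, R Lipschitz with constant L and R(0) = 0, σ_d > 0. There exists m₀ > 0 such that for every m ∈ (0, m₀), the singular boundary value problem −Q'' + (d-1) r^{-1} Q' = R(Q' r^{1-d} σ_d^{-1}) Q on (0,1), Q(0) = 0, Q(1) = m, has at least one solution Q ∈ C¹((0,1]) with sup_r |Q(r) r^{2-d}| and sup_r |Q'(r) r^{3-d}| finite. -/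
open Set MeasureTheory intervalIntegral
open scoped Interval

namespace Stmt13Aux

lemma intInt_of_meas {f : ℝ → ℝ} {C a b : ℝ} (hm : Measurable f)
    (hbd : ∀ x ∈ Ι a b, |f x| ≤ C) : IntervalIntegrable f volume a b := by
  rw [intervalIntegrable_iff]
  apply Integrable.mono' (g := fun _ => C)
    (integrableOn_const (by rw [Set.uIoc]; exact measure_Ioc_lt_top.ne))
    hm.aestronglyMeasurable.restrict
  filter_upwards [ae_restrict_mem measurableSet_uIoc] with x hx
  rw [Real.norm_eq_abs]; exact hbd x hx

lemma intInt_of_contOn {f : ℝ → ℝ} {a b C : ℝ} (hab : a ≤ b)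
    (hc : ContinuousOn f (Ioc a b)) (hbd : ∀ x ∈ Ioc a b, |f x| ≤ C) :
    IntervalIntegrable f volume a b := by
  rw [intervalIntegrable_iff_integrableOn_Ioc_of_le hab]
  apply Integrable.mono' (g := fun _ => C) (integrableOn_const measure_Ioc_lt_top.ne)
    (hc.aestronglyMeasurable measurableSet_Ioc)
  filter_upwards [ae_restrict_mem measurableSet_Ioc] with x hx
  rw [Real.norm_eq_abs]; exact hbd x hx

lemma abs_R_le {L : ℝ} {R : ℝ → ℝ} (hRlip : ∀ x y : ℝ, |R x - R y| ≤ L * |x - y|)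
    (hR0 : R 0 = 0) (x : ℝ) : |R x| ≤ L * |x| := by
  simpa [hR0] using hRlip x 0

lemma cont_R {L : ℝ} {R : ℝ → ℝ} (hL : 0 ≤ L) (hRlip : ∀ x y : ℝ, |R x - R y| ≤ L * |x - y|) :
    Continuous R := by
  apply LipschitzWith.continuous (K := ⟨L, hL⟩)
  apply LipschitzWith.of_dist_le_mul
  intro x y
  have := hRlip x y; rw [← Real.dist_eq, ← Real.dist_eq] at this; exact this

variable (d : ℕ) (σ : ℝ) (R : ℝ → ℝ)

noncomputable def gfun (w : BoundedContinuousFunction ℝ ℝ) (t : ℝ) : ℝ :=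
  t ^ (d - 3) * w (Real.log t)

noncomputable def Qfun (w : BoundedContinuousFunction ℝ ℝ) (r : ℝ) : ℝ :=
  ∫ t in (0:ℝ)..r, gfun d w t

noncomputable def hfun (w : BoundedContinuousFunction ℝ ℝ) (s : ℝ) : ℝ :=
  (s ^ (d-1))⁻¹ * (R (w (Real.log s) * (s^2)⁻¹ * σ⁻¹) * Qfun d w s)

noncomputable def Ifun (w : BoundedContinuousFunction ℝ ℝ) (r : ℝ) : ℝ :=
  ∫ s in r..(1:ℝ), hfun d σ R w s

noncomputable def Jfun (w : BoundedContinuousFunction ℝ ℝ) : ℝ :=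
  ∫ s in (0:ℝ)..(1:ℝ), s ^ (d-1) * Ifun d σ R w s

noncomputable def Ffun (m : ℝ) (w : BoundedContinuousFunction ℝ ℝ) (r : ℝ) : ℝ :=
  d * (m - Jfun d σ R w) * r^2 + r^2 * Ifun d σ R w r

variable {d σ R}

lemma meas_g (w : BoundedContinuousFunction ℝ ℝ) : Measurable (gfun d w) :=
  (measurable_id.pow_const _).mul (w.continuous.measurable.comp Real.measurable_log)

lemma contOn_g (w : BoundedContinuousFunction ℝ ℝ) : ContinuousOn (gfun d w) (Ioi 0) := by
  apply (continuous_pow _).continuousOn.mul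
  exact w.continuous.comp_continuousOn
    (Real.continuousOn_log.mono (by intro x hx; simpa using ne_of_gt hx))

lemma abs_g_le (w : BoundedContinuousFunction ℝ ℝ) {t : ℝ} (h0 : 0 ≤ t) :
    |gfun d w t| ≤ ‖w‖ * t ^ (d - 3) := by
  rw [gfun, abs_mul, abs_pow, abs_of_nonneg h0, mul_comm]
  gcongr
  exact w.norm_coe_le_norm _

lemma intInt_g (w : BoundedContinuousFunction ℝ ℝ) (a b : ℝ) :
    IntervalIntegrable (gfun d w) volume a b := by
  apply intInt_of_meas (meas_g w) (C := (1 + |a| + |b|) ^ (d - 3) * ‖w‖)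
  intro x hx
  have hx' : |x| ≤ 1 + |a| + |b| := by
    rw [Set.uIoc] at hx
    have hlo : -(1 + |a| + |b|) ≤ a ⊓ b :=
      le_min (by linarith [neg_abs_le a, abs_nonneg b]) (by linarith [neg_abs_le b, abs_nonneg a])
    have hhi : a ⊔ b ≤ 1 + |a| + |b| :=
      max_le (by linarith [le_abs_self a, abs_nonneg b]) (by linarith [le_abs_self b, abs_nonneg a])
    rw [abs_le]
    exact ⟨by linarith [hx.1.le], by linarith [hx.2]⟩
  calc |gfun d w x| ≤ |x| ^ (d-3) * ‖w‖ := by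
        rw [gfun, abs_mul, abs_pow]
        gcongr
        exact w.norm_coe_le_norm _
    _ ≤ (1 + |a| + |b|) ^ (d-3) * ‖w‖ := by
        gcongr

lemma Qfun_bound (hd : 3 ≤ d) (w : BoundedContinuousFunction ℝ ℝ) {s : ℝ} (h0 : 0 < s)
    (h1 : s ≤ 1) : |Qfun d w s| ≤ ‖w‖ * s ^ (d - 2) := by
  have key : |Qfun d w s| ≤ |∫ t in (0:ℝ)..s, ‖w‖ * t ^ (d-3)| := by
    rw [Qfun, ← Real.norm_eq_abs]
    apply intervalIntegral.norm_integral_le_abs_of_norm_le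
    · filter_upwards [ae_restrict_mem measurableSet_uIoc] with t ht
      rw [uIoc_of_le h0.le] at ht
      exact abs_g_le w ht.1.le
    · exact (continuous_const.mul (continuous_pow _)).intervalIntegrable _ _
  have hcast : (0:ℝ) < (d - 3 : ℕ) + 1 := by positivity
  have hval : ∫ t in (0:ℝ)..s, ‖w‖ * t ^ (d-3) = ‖w‖ * (s ^ (d - 3 + 1) / ((d - 3 : ℕ) + 1)) := by
    rw [intervalIntegral.integral_const_mul, integral_pow]
    norm_num
  have h32 : d - 3 + 1 = d - 2 := by omega
  have hle : s ^ (d - 3 + 1) / ((d - 3 : ℕ) + 1) ≤ s ^ (d - 2) := by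
    rw [h32]
    apply div_le_self (by positivity)
    have : (0:ℝ) ≤ (d - 3 : ℕ) := by positivity
    linarith
  calc |Qfun d w s| ≤ |∫ t in (0:ℝ)..s, ‖w‖ * t ^ (d-3)| := key
    _ = ‖w‖ * (s ^ (d - 3 + 1) / ((d - 3 : ℕ) + 1)) := by
        rw [hval]; exact abs_of_nonneg (by positivity)
    _ ≤ ‖w‖ * s ^ (d - 2) := by gcongr

lemma Qfun_cont (w : BoundedContinuousFunction ℝ ℝ) : Continuous (Qfun d w) :=
  intervalIntegral.continuous_primitive (fun a b => intInt_g w a b) 0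

lemma Qfun_hasDeriv (w : BoundedContinuousFunction ℝ ℝ) {r : ℝ} (hr : 0 < r) :
    HasDerivAt (Qfun d w) (gfun d w r) r := by
  apply intervalIntegral.integral_hasDerivAt_right (intInt_g w 0 r)
    ((contOn_g w).stronglyMeasurableAtFilter isOpen_Ioi r hr)
  exact (contOn_g w).continuousAt (Ioi_mem_nhds hr)


lemma integral_inv_cube {r : ℝ} (h0 : 0 < r) (h1 : r ≤ 1) :
    ∫ s in r..(1:ℝ), (s^3)⁻¹ = ((r^2)⁻¹ - 1) / 2 := by
  have he : ∀ s : ℝ, (s^3)⁻¹ = s ^ (-3 : ℤ) := fun s => by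
    rw [zpow_neg]; norm_num
  simp_rw [he]
  rw [integral_zpow (Or.inr ⟨by norm_num, by
    intro hmem
    rcases hmem with ⟨hl, hr⟩
    simp [min_def, h1] at hl
    linarith⟩)]
  have hr2 : (r:ℝ) ^ (-2:ℤ) = (r^2)⁻¹ := by rw [zpow_neg]; norm_num
  norm_num [hr2]
  ring

lemma pow_identity {s : ℝ} (hs : s ≠ 0) (d : ℕ) (hd : 3 ≤ d) :
    (s ^ (d-1))⁻¹ * ((s^2)⁻¹ * s ^ (d-2)) = (s^3)⁻¹ := by
  field_simp
  rw [← pow_succ']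
  congr 1
  omega

lemma hfun_contOn (w : BoundedContinuousFunction ℝ ℝ) (hR : Continuous R) :
    ContinuousOn (hfun d σ R w) (Ioi 0) := by
  apply ContinuousOn.mul
  · exact ContinuousOn.inv₀ (continuous_pow _).continuousOn
      (fun x hx => pow_ne_zero _ (ne_of_gt hx))
  · apply ContinuousOn.mul
    · apply hR.comp_continuousOn
      apply ContinuousOn.mul (ContinuousOn.mul ?_ ?_) continuousOn_const
      · exact w.continuous.comp_continuousOn
          (Real.continuousOn_log.mono (by intro x hx; simpa using ne_of_gt hx))
      · exact ContinuousOn.inv₀ (continuous_pow _).continuousOn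
          (fun x hx => pow_ne_zero _ (ne_of_gt hx))
    · exact (Qfun_cont w).continuousOn

lemma hfun_bound {L : ℝ} (hd : 3 ≤ d) (hL : 0 ≤ L) (hσ : 0 < σ)
    (hRlip : ∀ x y : ℝ, |R x - R y| ≤ L * |x - y|) (hR0 : R 0 = 0)
    (w : BoundedContinuousFunction ℝ ℝ) {s : ℝ} (h0 : 0 < s) (h1 : s ≤ 1) :
    |hfun d σ R w s| ≤ L * σ⁻¹ * ‖w‖^2 * (s^3)⁻¹ := by
  have hRb : |R (w (Real.log s) * (s^2)⁻¹ * σ⁻¹)| ≤ L * (‖w‖ * (s^2)⁻¹ * σ⁻¹) := by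
    refine (abs_R_le hRlip hR0 _).trans ?_
    rw [abs_mul, abs_mul]
    gcongr
    · exact w.norm_coe_le_norm _
    · rw [abs_of_nonneg]; positivity
    · rw [abs_of_nonneg]; positivity
  have hQb := Qfun_bound hd w h0 h1
  calc |hfun d σ R w s|
      = (s ^ (d-1))⁻¹ * (|R (w (Real.log s) * (s^2)⁻¹ * σ⁻¹)| * |Qfun d w s|) := by
        rw [hfun, abs_mul, abs_mul, abs_of_nonneg (by positivity)]
    _ ≤ (s ^ (d-1))⁻¹ * ((L * (‖w‖ * (s^2)⁻¹ * σ⁻¹)) * (‖w‖ * s ^ (d-2))) := by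
        gcongr
    _ = L * σ⁻¹ * ‖w‖^2 * ((s ^ (d-1))⁻¹ * ((s^2)⁻¹ * s ^ (d-2))) := by ring
    _ = L * σ⁻¹ * ‖w‖^2 * (s^3)⁻¹ := by rw [pow_identity (ne_of_gt h0) d hd]


lemma intInt_h (w : BoundedContinuousFunction ℝ ℝ) (hR : Continuous R) {a b : ℝ}
    (ha : 0 < a) (hb : 0 < b) : IntervalIntegrable (hfun d σ R w) volume a b := by
  apply ContinuousOn.intervalIntegrable
  apply (hfun_contOn w hR).mono
  intro x hx
  exact lt_of_lt_of_le (lt_min ha hb) hx.1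

lemma intInt_inv_cube {a b : ℝ} (ha : 0 < a) (hb : 0 < b) (c : ℝ) :
    IntervalIntegrable (fun s : ℝ => c * (s^3)⁻¹) volume a b := by
  apply ContinuousOn.intervalIntegrable
  apply ContinuousOn.mul continuousOn_const
  apply ContinuousOn.inv₀ (continuous_pow _).continuousOn
  intro x hx
  exact pow_ne_zero _ (ne_of_gt (lt_of_lt_of_le (lt_min ha hb) hx.1))

lemma Ifun_bound {L : ℝ} (hd : 3 ≤ d) (hL : 0 ≤ L) (hσ : 0 < σ)
    (hRlip : ∀ x y : ℝ, |R x - R y| ≤ L * |x - y|) (hR0 : R 0 = 0)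
    (w : BoundedContinuousFunction ℝ ℝ) {r : ℝ} (h0 : 0 < r) (h1 : r ≤ 1) :
    |Ifun d σ R w r| ≤ L * σ⁻¹ * ‖w‖^2 / 2 * (r^2)⁻¹ := by
  have hB : (0:ℝ) ≤ L * σ⁻¹ * ‖w‖^2 := by positivity
  have key : |Ifun d σ R w r| ≤ |∫ s in r..(1:ℝ), L * σ⁻¹ * ‖w‖^2 * (s^3)⁻¹| := by
    rw [Ifun, ← Real.norm_eq_abs]
    apply intervalIntegral.norm_integral_le_abs_of_norm_le
    · filter_upwards [ae_restrict_mem measurableSet_uIoc] with s hs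
      rw [uIoc_of_le h1] at hs
      exact hfun_bound hd hL hσ hRlip hR0 w (h0.trans hs.1) hs.2
    · exact intInt_inv_cube h0 one_pos _
  rw [intervalIntegral.integral_const_mul, integral_inv_cube h0 h1] at key
  have hx1 : (1:ℝ) ≤ (r^2)⁻¹ := by
    rw [le_inv_comm₀ one_pos (by positivity)]
    nlinarith
  calc |Ifun d σ R w r| ≤ |L * σ⁻¹ * ‖w‖^2 * (((r^2)⁻¹ - 1) / 2)| := key
    _ ≤ L * σ⁻¹ * ‖w‖^2 * ((r^2)⁻¹ / 2) := by
        rw [abs_mul, abs_of_nonneg hB]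
        gcongr
        rw [abs_le]
        constructor <;> linarith
    _ = L * σ⁻¹ * ‖w‖^2 / 2 * (r^2)⁻¹ := by ring

lemma Ifun_hasDeriv (w : BoundedContinuousFunction ℝ ℝ) (hR : Continuous R) {r : ℝ}
    (hr : 0 < r) : HasDerivAt (Ifun d σ R w) (-(hfun d σ R w r)) r := by
  have heq : Ifun d σ R w = fun u => -(∫ s in (1:ℝ)..u, hfun d σ R w s) := by
    funext u
    rw [Ifun, intervalIntegral.integral_symm]
  rw [heq]
  apply HasDerivAt.neg
  apply intervalIntegral.integral_hasDerivAt_right (intInt_h w hR one_pos hr)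
    ((hfun_contOn w hR).stronglyMeasurableAtFilter isOpen_Ioi r hr)
  exact (hfun_contOn w hR).continuousAt (Ioi_mem_nhds hr)


lemma J_integrand_contOn (w : BoundedContinuousFunction ℝ ℝ) (hR : Continuous R) :
    ContinuousOn (fun s => s ^ (d-1) * Ifun d σ R w s) (Ioc (0:ℝ) 1) := by
  apply ContinuousOn.mul (continuous_pow _).continuousOn
  intro s hs
  exact ((Ifun_hasDeriv w hR hs.1).continuousAt).continuousWithinAt

lemma J_integrand_bound {L : ℝ} (hd : 3 ≤ d) (hL : 0 ≤ L) (hσ : 0 < σ)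
    (hRlip : ∀ x y : ℝ, |R x - R y| ≤ L * |x - y|) (hR0 : R 0 = 0)
    (w : BoundedContinuousFunction ℝ ℝ) {s : ℝ} (hs : s ∈ Ioc (0:ℝ) 1) :
    |s ^ (d-1) * Ifun d σ R w s| ≤ L * σ⁻¹ * ‖w‖^2 / 2 := by
  have h0 := hs.1
  have h1 := hs.2
  have hpi : s ^ (d-1) * (s^2)⁻¹ = s ^ (d-3) := by
    field_simp
    rw [← pow_add]
    congr 1
    omega
  calc |s ^ (d-1) * Ifun d σ R w s|
      = s ^ (d-1) * |Ifun d σ R w s| := by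
        rw [abs_mul, abs_of_nonneg (by positivity)]
    _ ≤ s ^ (d-1) * (L * σ⁻¹ * ‖w‖^2 / 2 * (s^2)⁻¹) := by
        gcongr
        exact Ifun_bound hd hL hσ hRlip hR0 w h0 h1
    _ = L * σ⁻¹ * ‖w‖^2 / 2 * (s ^ (d-1) * (s^2)⁻¹) := by ring
    _ = L * σ⁻¹ * ‖w‖^2 / 2 * s ^ (d-3) := by rw [hpi]
    _ ≤ L * σ⁻¹ * ‖w‖^2 / 2 * 1 := by
        gcongr
        exact pow_le_one₀ h0.le h1
    _ = L * σ⁻¹ * ‖w‖^2 / 2 := mul_one _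

lemma intInt_J {L : ℝ} (hd : 3 ≤ d) (hL : 0 ≤ L) (hσ : 0 < σ)
    (hRlip : ∀ x y : ℝ, |R x - R y| ≤ L * |x - y|) (hR0 : R 0 = 0)
    (w : BoundedContinuousFunction ℝ ℝ) (hR : Continuous R) :
    IntervalIntegrable (fun s => s ^ (d-1) * Ifun d σ R w s) volume 0 1 :=
  intInt_of_contOn zero_le_one (J_integrand_contOn w hR)
    (fun s hs => J_integrand_bound hd hL hσ hRlip hR0 w hs)

lemma Jfun_bound {L : ℝ} (hd : 3 ≤ d) (hL : 0 ≤ L) (hσ : 0 < σ)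
    (hRlip : ∀ x y : ℝ, |R x - R y| ≤ L * |x - y|) (hR0 : R 0 = 0)
    (w : BoundedContinuousFunction ℝ ℝ) :
    |Jfun d σ R w| ≤ L * σ⁻¹ * ‖w‖^2 / 2 := by
  rw [Jfun, ← Real.norm_eq_abs]
  have := intervalIntegral.norm_integral_le_of_norm_le_const
    (a := (0:ℝ)) (b := 1) (C := L * σ⁻¹ * ‖w‖^2 / 2)
    (f := fun s => s ^ (d-1) * Ifun d σ R w s) ?_
  · simpa using this
  · intro x hx
    rw [uIoc_of_le zero_le_one] at hx
    rw [Real.norm_eq_abs]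
    exact J_integrand_bound hd hL hσ hRlip hR0 w hx

lemma Qfun_sub (w₁ w₂ : BoundedContinuousFunction ℝ ℝ) (s : ℝ) :
    Qfun d (w₁ - w₂) s = Qfun d w₁ s - Qfun d w₂ s := by
  rw [Qfun, Qfun, Qfun, ← intervalIntegral.integral_sub (intInt_g w₁ 0 s) (intInt_g w₂ 0 s)]
  apply intervalIntegral.integral_congr
  intro t _
  simp [gfun]
  ring

lemma Qfun_diff (hd : 3 ≤ d) (w₁ w₂ : BoundedContinuousFunction ℝ ℝ) {s : ℝ} (h0 : 0 < s)
    (h1 : s ≤ 1) : |Qfun d w₁ s - Qfun d w₂ s| ≤ ‖w₁ - w₂‖ * s ^ (d-2) := by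
  rw [← Qfun_sub]
  exact Qfun_bound hd _ h0 h1

lemma hfun_diff {L ρ : ℝ} (hd : 3 ≤ d) (hL : 0 ≤ L) (hσ : 0 < σ)
    (hRlip : ∀ x y : ℝ, |R x - R y| ≤ L * |x - y|) (hR0 : R 0 = 0)
    (w₁ w₂ : BoundedContinuousFunction ℝ ℝ) (hw₁ : ‖w₁‖ ≤ ρ) (hw₂ : ‖w₂‖ ≤ ρ)
    {s : ℝ} (h0 : 0 < s) (h1 : s ≤ 1) :
    |hfun d σ R w₁ s - hfun d σ R w₂ s| ≤ 2 * (L * σ⁻¹) * ρ * ‖w₁ - w₂‖ * (s^3)⁻¹ := by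
  have hρ : 0 ≤ ρ := (norm_nonneg w₁).trans hw₁
  set a₁ := w₁ (Real.log s) * (s^2)⁻¹ * σ⁻¹ with ha₁
  set a₂ := w₂ (Real.log s) * (s^2)⁻¹ * σ⁻¹ with ha₂
  have hwd : |w₁ (Real.log s) - w₂ (Real.log s)| ≤ ‖w₁ - w₂‖ := by
    have := (w₁ - w₂).norm_coe_le_norm (Real.log s)
    simpa using this
  have hdiffR : |R a₁ - R a₂| ≤ L * (‖w₁ - w₂‖ * (s^2)⁻¹ * σ⁻¹) := by
    refine (hRlip a₁ a₂).trans ?_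
    rw [ha₁, ha₂]
    have : w₁ (Real.log s) * (s^2)⁻¹ * σ⁻¹ - w₂ (Real.log s) * (s^2)⁻¹ * σ⁻¹
        = (w₁ (Real.log s) - w₂ (Real.log s)) * (s^2)⁻¹ * σ⁻¹ := by ring
    rw [this, abs_mul, abs_mul]
    gcongr
    · rw [abs_of_nonneg]; positivity
    · rw [abs_of_nonneg]; positivity
  have hRa₂ : |R a₂| ≤ L * (ρ * (s^2)⁻¹ * σ⁻¹) := by
    refine (abs_R_le hRlip hR0 _).trans ?_
    rw [ha₂, abs_mul, abs_mul]
    gcongr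
    · exact (w₂.norm_coe_le_norm _).trans hw₂
    · rw [abs_of_nonneg]; positivity
    · rw [abs_of_nonneg]; positivity
  have hQ₁ : |Qfun d w₁ s| ≤ ρ * s ^ (d-2) :=
    (Qfun_bound hd w₁ h0 h1).trans (by gcongr)
  have hQd : |Qfun d w₁ s - Qfun d w₂ s| ≤ ‖w₁ - w₂‖ * s ^ (d-2) := Qfun_diff hd w₁ w₂ h0 h1
  have key : hfun d σ R w₁ s - hfun d σ R w₂ s
      = (s ^ (d-1))⁻¹ * ((R a₁ - R a₂) * Qfun d w₁ s + R a₂ * (Qfun d w₁ s - Qfun d w₂ s)) := by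
    rw [hfun, hfun]; ring
  rw [key]
  calc |(s ^ (d-1))⁻¹ * ((R a₁ - R a₂) * Qfun d w₁ s + R a₂ * (Qfun d w₁ s - Qfun d w₂ s))|
      ≤ (s ^ (d-1))⁻¹ * (|R a₁ - R a₂| * |Qfun d w₁ s| + |R a₂| * |Qfun d w₁ s - Qfun d w₂ s|) := by
        rw [abs_mul, abs_of_nonneg (a := (s ^ (d-1))⁻¹) (by positivity)]
        gcongr
        refine (abs_add_le _ _).trans ?_
        rw [abs_mul, abs_mul]
    _ ≤ (s ^ (d-1))⁻¹ * ((L * (‖w₁ - w₂‖ * (s^2)⁻¹ * σ⁻¹)) * (ρ * s ^ (d-2))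
          + (L * (ρ * (s^2)⁻¹ * σ⁻¹)) * (‖w₁ - w₂‖ * s ^ (d-2))) := by
        gcongr
    _ = 2 * (L * σ⁻¹) * ρ * ‖w₁ - w₂‖ * ((s ^ (d-1))⁻¹ * ((s^2)⁻¹ * s ^ (d-2))) := by ring
    _ = 2 * (L * σ⁻¹) * ρ * ‖w₁ - w₂‖ * (s^3)⁻¹ := by rw [pow_identity (ne_of_gt h0) d hd]


lemma Ifun_diff {L ρ : ℝ} (hd : 3 ≤ d) (hL : 0 ≤ L) (hσ : 0 < σ)
    (hRlip : ∀ x y : ℝ, |R x - R y| ≤ L * |x - y|) (hR0 : R 0 = 0) (hR : Continuous R)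
    (w₁ w₂ : BoundedContinuousFunction ℝ ℝ) (hw₁ : ‖w₁‖ ≤ ρ) (hw₂ : ‖w₂‖ ≤ ρ)
    {r : ℝ} (h0 : 0 < r) (h1 : r ≤ 1) :
    |Ifun d σ R w₁ r - Ifun d σ R w₂ r| ≤ (L * σ⁻¹) * ρ * ‖w₁ - w₂‖ * (r^2)⁻¹ := by
  have hρ : 0 ≤ ρ := (norm_nonneg w₁).trans hw₁
  have hkey : Ifun d σ R w₁ r - Ifun d σ R w₂ r
      = ∫ s in r..(1:ℝ), (hfun d σ R w₁ s - hfun d σ R w₂ s) :=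
    (intervalIntegral.integral_sub (intInt_h w₁ hR h0 one_pos) (intInt_h w₂ hR h0 one_pos)).symm
  rw [hkey]
  have key : |∫ s in r..(1:ℝ), (hfun d σ R w₁ s - hfun d σ R w₂ s)|
      ≤ |∫ s in r..(1:ℝ), 2 * (L * σ⁻¹) * ρ * ‖w₁ - w₂‖ * (s^3)⁻¹| := by
    rw [← Real.norm_eq_abs]
    apply intervalIntegral.norm_integral_le_abs_of_norm_le
    · filter_upwards [ae_restrict_mem measurableSet_uIoc] with s hs
      rw [uIoc_of_le h1] at hs
      exact hfun_diff hd hL hσ hRlip hR0 w₁ w₂ hw₁ hw₂ (h0.trans hs.1) hs.2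
    · exact intInt_inv_cube h0 one_pos _
  rw [intervalIntegral.integral_const_mul, integral_inv_cube h0 h1] at key
  have hx1 : (1:ℝ) ≤ (r^2)⁻¹ := by
    rw [le_inv_comm₀ one_pos (by positivity)]
    nlinarith
  refine key.trans ?_
  have hc : (0:ℝ) ≤ 2 * (L * σ⁻¹) * ρ * ‖w₁ - w₂‖ := by positivity
  rw [abs_mul, abs_of_nonneg hc]
  calc 2 * (L * σ⁻¹) * ρ * ‖w₁ - w₂‖ * |((r^2)⁻¹ - 1) / 2|
      ≤ 2 * (L * σ⁻¹) * ρ * ‖w₁ - w₂‖ * ((r^2)⁻¹ / 2) := by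
        gcongr
        rw [abs_le]
        constructor <;> linarith
    _ = (L * σ⁻¹) * ρ * ‖w₁ - w₂‖ * (r^2)⁻¹ := by ring

lemma Jfun_diff {L ρ : ℝ} (hd : 3 ≤ d) (hL : 0 ≤ L) (hσ : 0 < σ)
    (hRlip : ∀ x y : ℝ, |R x - R y| ≤ L * |x - y|) (hR0 : R 0 = 0) (hR : Continuous R)
    (w₁ w₂ : BoundedContinuousFunction ℝ ℝ) (hw₁ : ‖w₁‖ ≤ ρ) (hw₂ : ‖w₂‖ ≤ ρ) :
    |Jfun d σ R w₁ - Jfun d σ R w₂| ≤ (L * σ⁻¹) * ρ * ‖w₁ - w₂‖ := by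
  have hρ : 0 ≤ ρ := (norm_nonneg w₁).trans hw₁
  have hkey : Jfun d σ R w₁ - Jfun d σ R w₂
      = ∫ s in (0:ℝ)..1, (s ^ (d-1) * Ifun d σ R w₁ s - s ^ (d-1) * Ifun d σ R w₂ s) :=
    (intervalIntegral.integral_sub (intInt_J hd hL hσ hRlip hR0 w₁ hR)
      (intInt_J hd hL hσ hRlip hR0 w₂ hR)).symm
  rw [hkey, ← Real.norm_eq_abs]
  have := intervalIntegral.norm_integral_le_of_norm_le_const
    (a := (0:ℝ)) (b := 1) (C := (L * σ⁻¹) * ρ * ‖w₁ - w₂‖)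
    (f := fun s => s ^ (d-1) * Ifun d σ R w₁ s - s ^ (d-1) * Ifun d σ R w₂ s) ?_
  · simpa using this
  · intro s hs
    rw [uIoc_of_le zero_le_one] at hs
    rw [Real.norm_eq_abs]
    have hpi : s ^ (d-1) * (s^2)⁻¹ = s ^ (d-3) := by
      have hs0 : s ≠ 0 := ne_of_gt hs.1
      field_simp
      rw [← pow_add]
      congr 1
      omega
    calc |s ^ (d-1) * Ifun d σ R w₁ s - s ^ (d-1) * Ifun d σ R w₂ s|
        = s ^ (d-1) * |Ifun d σ R w₁ s - Ifun d σ R w₂ s| := by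
          rw [← mul_sub, abs_mul, abs_of_nonneg (pow_nonneg hs.1.le _)]
      _ ≤ s ^ (d-1) * ((L * σ⁻¹) * ρ * ‖w₁ - w₂‖ * (s^2)⁻¹) :=
          mul_le_mul_of_nonneg_left
            (Ifun_diff hd hL hσ hRlip hR0 hR w₁ w₂ hw₁ hw₂ hs.1 hs.2) (pow_nonneg hs.1.le _)
      _ = (L * σ⁻¹) * ρ * ‖w₁ - w₂‖ * (s ^ (d-1) * (s^2)⁻¹) := by ring
      _ = (L * σ⁻¹) * ρ * ‖w₁ - w₂‖ * s ^ (d-3) := by rw [hpi]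
      _ ≤ (L * σ⁻¹) * ρ * ‖w₁ - w₂‖ * 1 :=
          mul_le_mul_of_nonneg_left (pow_le_one₀ hs.1.le hs.2) (by positivity)
      _ = (L * σ⁻¹) * ρ * ‖w₁ - w₂‖ := mul_one _


lemma Ffun_bound {L m : ℝ} (hd : 3 ≤ d) (hL : 0 ≤ L) (hσ : 0 < σ)
    (hRlip : ∀ x y : ℝ, |R x - R y| ≤ L * |x - y|) (hR0 : R 0 = 0)
    (w : BoundedContinuousFunction ℝ ℝ) {r : ℝ} (hr : r ∈ Ioc (0:ℝ) 1) :
    |Ffun d σ R m w r| ≤ d * (|m| + L * σ⁻¹ * ‖w‖^2 / 2) + L * σ⁻¹ * ‖w‖^2 / 2 := by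
  have h0 := hr.1
  have h1 := hr.2
  have hr2 : r^2 ≤ 1 := by nlinarith
  have hr2' : (0:ℝ) < r^2 := by positivity
  have hJ := Jfun_bound hd hL hσ hRlip hR0 w
  have hI := Ifun_bound hd hL hσ hRlip hR0 w h0 h1
  have hIb : |r^2 * Ifun d σ R w r| ≤ L * σ⁻¹ * ‖w‖^2 / 2 := by
    rw [abs_mul, abs_of_nonneg hr2'.le]
    calc r^2 * |Ifun d σ R w r| ≤ r^2 * (L * σ⁻¹ * ‖w‖^2 / 2 * (r^2)⁻¹) :=
          mul_le_mul_of_nonneg_left hI hr2'.le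
      _ = L * σ⁻¹ * ‖w‖^2 / 2 * (r^2 * (r^2)⁻¹) := by ring
      _ = L * σ⁻¹ * ‖w‖^2 / 2 := by rw [mul_inv_cancel₀ (ne_of_gt hr2'), mul_one]
  have hcb : |(d:ℝ) * (m - Jfun d σ R w) * r^2| ≤ d * (|m| + L * σ⁻¹ * ‖w‖^2 / 2) := by
    rw [abs_mul, abs_mul, Nat.abs_cast, abs_of_nonneg hr2'.le]
    calc (d:ℝ) * |m - Jfun d σ R w| * r^2 ≤ (d:ℝ) * |m - Jfun d σ R w| * 1 := by
          apply mul_le_mul_of_nonneg_left hr2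
          positivity
      _ = (d:ℝ) * |m - Jfun d σ R w| := mul_one _
      _ ≤ (d:ℝ) * (|m| + L * σ⁻¹ * ‖w‖^2 / 2) := by
          apply mul_le_mul_of_nonneg_left _ (Nat.cast_nonneg d)
          exact (abs_sub _ _).trans (by linarith [abs_sub_comm m (Jfun d σ R w)])
  calc |Ffun d σ R m w r| ≤ |(d:ℝ) * (m - Jfun d σ R w) * r^2| + |r^2 * Ifun d σ R w r| :=
        abs_add_le _ _
    _ ≤ d * (|m| + L * σ⁻¹ * ‖w‖^2 / 2) + L * σ⁻¹ * ‖w‖^2 / 2 := add_le_add hcb hIb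

lemma Ffun_diff {L m ρ : ℝ} (hd : 3 ≤ d) (hL : 0 ≤ L) (hσ : 0 < σ)
    (hRlip : ∀ x y : ℝ, |R x - R y| ≤ L * |x - y|) (hR0 : R 0 = 0) (hR : Continuous R)
    (w₁ w₂ : BoundedContinuousFunction ℝ ℝ) (hw₁ : ‖w₁‖ ≤ ρ) (hw₂ : ‖w₂‖ ≤ ρ)
    {r : ℝ} (hr : r ∈ Ioc (0:ℝ) 1) :
    |Ffun d σ R m w₁ r - Ffun d σ R m w₂ r| ≤ ((d:ℝ) + 1) * ((L * σ⁻¹) * ρ * ‖w₁ - w₂‖) := by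
  have h0 := hr.1
  have h1 := hr.2
  have hr2 : r^2 ≤ 1 := by nlinarith
  have hr2' : (0:ℝ) < r^2 := by positivity
  have hkey : Ffun d σ R m w₁ r - Ffun d σ R m w₂ r
      = (d:ℝ) * (Jfun d σ R w₂ - Jfun d σ R w₁) * r^2
        + r^2 * (Ifun d σ R w₁ r - Ifun d σ R w₂ r) := by
    rw [Ffun, Ffun]; ring
  have hJ := Jfun_diff hd hL hσ hRlip hR0 hR w₁ w₂ hw₁ hw₂
  have hI := Ifun_diff hd hL hσ hRlip hR0 hR w₁ w₂ hw₁ hw₂ h0 h1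
  rw [hkey]
  calc |(d:ℝ) * (Jfun d σ R w₂ - Jfun d σ R w₁) * r^2
        + r^2 * (Ifun d σ R w₁ r - Ifun d σ R w₂ r)|
      ≤ |(d:ℝ) * (Jfun d σ R w₂ - Jfun d σ R w₁) * r^2|
        + |r^2 * (Ifun d σ R w₁ r - Ifun d σ R w₂ r)| := abs_add_le _ _
    _ ≤ (d:ℝ) * ((L * σ⁻¹) * ρ * ‖w₁ - w₂‖) + (L * σ⁻¹) * ρ * ‖w₁ - w₂‖ := by
        apply add_le_add
        · rw [abs_mul, abs_mul, Nat.abs_cast, abs_of_nonneg hr2'.le]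
          calc (d:ℝ) * |Jfun d σ R w₂ - Jfun d σ R w₁| * r^2
              ≤ (d:ℝ) * |Jfun d σ R w₂ - Jfun d σ R w₁| * 1 := by
                apply mul_le_mul_of_nonneg_left hr2
                positivity
            _ = (d:ℝ) * |Jfun d σ R w₂ - Jfun d σ R w₁| := mul_one _
            _ ≤ (d:ℝ) * ((L * σ⁻¹) * ρ * ‖w₁ - w₂‖) := by
                apply mul_le_mul_of_nonneg_left _ (Nat.cast_nonneg d)
                rw [abs_sub_comm]
                exact hJ
        · rw [abs_mul, abs_of_nonneg hr2'.le]
          calc r^2 * |Ifun d σ R w₁ r - Ifun d σ R w₂ r|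
              ≤ r^2 * ((L * σ⁻¹) * ρ * ‖w₁ - w₂‖ * (r^2)⁻¹) :=
                mul_le_mul_of_nonneg_left hI hr2'.le
            _ = (L * σ⁻¹) * ρ * ‖w₁ - w₂‖ * (r^2 * (r^2)⁻¹) := by ring
            _ = (L * σ⁻¹) * ρ * ‖w₁ - w₂‖ := by rw [mul_inv_cancel₀ (ne_of_gt hr2'), mul_one]
    _ = ((d:ℝ) + 1) * ((L * σ⁻¹) * ρ * ‖w₁ - w₂‖) := by ring

lemma Ffun_contOn {m : ℝ} (w : BoundedContinuousFunction ℝ ℝ) (hR : Continuous R) :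
    ContinuousOn (Ffun d σ R m w) (Ioi 0) := by
  apply ContinuousOn.add
  · exact (continuous_const.mul (continuous_pow 2)).continuousOn
  · apply ContinuousOn.mul (continuous_pow 2).continuousOn
    intro r hr
    exact ((Ifun_hasDeriv w hR hr).continuousAt).continuousWithinAt

noncomputable def Tbcf (d : ℕ) (σ : ℝ) (R : ℝ → ℝ) (m L : ℝ) (hd : 3 ≤ d) (hL : 0 ≤ L)
    (hσ : 0 < σ) (hRlip : ∀ x y : ℝ, |R x - R y| ≤ L * |x - y|) (hR0 : R 0 = 0)
    (w : BoundedContinuousFunction ℝ ℝ) : BoundedContinuousFunction ℝ ℝ :=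
  BoundedContinuousFunction.ofNormedAddCommGroup
    (fun t => Ffun d σ R m w (min 1 (Real.exp t)))
    ((Ffun_contOn w (cont_R hL hRlip)).comp_continuous
      (continuous_const.min Real.continuous_exp)
      (fun t => lt_min one_pos (Real.exp_pos t)))
    (d * (|m| + L * σ⁻¹ * ‖w‖^2 / 2) + L * σ⁻¹ * ‖w‖^2 / 2)
    (fun t => by
      rw [Real.norm_eq_abs]
      exact Ffun_bound hd hL hσ hRlip hR0 w
        ⟨lt_min one_pos (Real.exp_pos t), min_le_left _ _⟩)

lemma Tbcf_apply (d : ℕ) (σ : ℝ) (R : ℝ → ℝ) (m L : ℝ) (hd : 3 ≤ d) (hL : 0 ≤ L)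
    (hσ : 0 < σ) (hRlip : ∀ x y : ℝ, |R x - R y| ≤ L * |x - y|) (hR0 : R 0 = 0)
    (w : BoundedContinuousFunction ℝ ℝ) (t : ℝ) :
    Tbcf d σ R m L hd hL hσ hRlip hR0 w t = Ffun d σ R m w (min 1 (Real.exp t)) := rfl


lemma rpow_sub_nat {r : ℝ} (hr : 0 < r) (a d : ℕ) (h : a ≤ d) :
    r ^ ((a:ℝ) - d) = (r ^ (d - a : ℕ))⁻¹ := by
  rw [← Real.rpow_natCast r (d - a), ← Real.rpow_neg hr.le]
  congr 1
  push_cast [Nat.cast_sub h]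
  ring

end Stmt13Aux

open Stmt13Aux

theorem stmt_13 (d : ℕ) (hd : 3 ≤ d) (L σ : ℝ) (hL : 0 ≤ L) (hσ : 0 < σ)
    (R : ℝ → ℝ) (hRlip : ∀ x y : ℝ, |R x - R y| ≤ L * |x - y|) (hR0 : R 0 = 0) :
    ∃ m₀ : ℝ, 0 < m₀ ∧ ∀ m ∈ Ioo (0:ℝ) m₀,
      ∃ Q Q' Q'' : ℝ → ℝ,
        (∀ r ∈ Ioc (0:ℝ) 1, HasDerivAt Q (Q' r) r) ∧
        ContinuousOn Q' (Ioc (0:ℝ) 1) ∧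
        (∃ C : ℝ, ∀ r ∈ Ioc (0:ℝ) 1,
          |Q r * r ^ ((2:ℝ) - d)| ≤ C ∧ |Q' r * r ^ ((3:ℝ) - d)| ≤ C) ∧
        ContinuousOn Q (Icc (0:ℝ) 1) ∧ Q 0 = 0 ∧ Q 1 = m ∧
        (∀ r ∈ Ioo (0:ℝ) 1, HasDerivAt Q' (Q'' r) r) ∧
        (∀ r ∈ Ioo (0:ℝ) 1,
          -Q'' r + (d - 1) * r⁻¹ * Q' r = R (Q' r * r ^ ((1:ℝ) - d) * σ⁻¹) * Q r) := by
  have hR : Continuous R := cont_R hL hRlip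
  have hdpos : (0:ℝ) < d := by exact_mod_cast lt_of_lt_of_le (by norm_num) hd
  refine ⟨σ / (4 * d * (d + 1) * (L + 1)), by positivity, ?_⟩
  rintro m ⟨hm0, hm1⟩
  set ρ : ℝ := 2 * d * m with hρdef
  have hρpos : 0 < ρ := by positivity
  -- smallness
  have hsmall : 2 * (d:ℝ) * ((d:ℝ) + 1) * (L * σ⁻¹) * m ≤ 1 / 2 := by
    have h1 : 2 * (d:ℝ) * ((d:ℝ) + 1) * (L * σ⁻¹) * m
        ≤ 2 * (d:ℝ) * ((d:ℝ) + 1) * (L * σ⁻¹) * (σ / (4 * d * (d + 1) * (L + 1))) := by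
      apply mul_le_mul_of_nonneg_left hm1.le
      positivity
    have h2 : 2 * (d:ℝ) * ((d:ℝ) + 1) * (L * σ⁻¹) * (σ / (4 * d * (d + 1) * (L + 1)))
        = L / (2 * (L + 1)) := by
      field_simp
      ring
    have h3 : L / (2 * (L + 1)) ≤ 1 / 2 := by
      rw [div_le_div_iff₀ (by positivity) (by norm_num)]
      nlinarith
    linarith
  -- invariance of the ball
  have hinv : ∀ w : BoundedContinuousFunction ℝ ℝ, ‖w‖ ≤ ρ →
      ‖Tbcf d σ R m L hd hL hσ hRlip hR0 w‖ ≤ ρ := by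
    intro w hw
    have hb : ‖Tbcf d σ R m L hd hL hσ hRlip hR0 w‖
        ≤ d * (|m| + L * σ⁻¹ * ‖w‖^2 / 2) + L * σ⁻¹ * ‖w‖^2 / 2 :=
      BoundedContinuousFunction.norm_ofNormedAddCommGroup_le _ (by positivity) _
    have hw2 : ‖w‖^2 ≤ ρ^2 := by nlinarith [norm_nonneg w]
    have : (d:ℝ) * (|m| + L * σ⁻¹ * ‖w‖^2 / 2) + L * σ⁻¹ * ‖w‖^2 / 2
        ≤ d * m + ((d:ℝ) + 1) * (L * σ⁻¹ * ρ^2 / 2) := by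
      rw [abs_of_pos hm0]
      have hLσ : 0 ≤ L * σ⁻¹ := by positivity
      nlinarith [mul_nonneg (mul_nonneg (by positivity : (0:ℝ) ≤ (d:ℝ)+1) hLσ)
        (by linarith : (0:ℝ) ≤ ρ^2 - ‖w‖^2)]
    have hfin : (d:ℝ) * m + ((d:ℝ) + 1) * (L * σ⁻¹ * ρ^2 / 2) ≤ ρ := by
      have : ((d:ℝ) + 1) * (L * σ⁻¹ * ρ^2 / 2) = (d:ℝ) * m * (2 * (d:ℝ) * ((d:ℝ)+1) * (L * σ⁻¹) * m) := by
        rw [hρdef]; ring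
      rw [this, hρdef]
      nlinarith [mul_pos hdpos hm0]
    linarith
  -- contraction estimate
  have hlip : ∀ w₁ w₂ : BoundedContinuousFunction ℝ ℝ, ‖w₁‖ ≤ ρ → ‖w₂‖ ≤ ρ →
      dist (Tbcf d σ R m L hd hL hσ hRlip hR0 w₁) (Tbcf d σ R m L hd hL hσ hRlip hR0 w₂)
        ≤ (1/2) * dist w₁ w₂ := by
    intro w₁ w₂ hw₁ hw₂
    rw [BoundedContinuousFunction.dist_le (by positivity)]
    intro t
    rw [Real.dist_eq, Tbcf_apply, Tbcf_apply, dist_eq_norm]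
    have hmem : min 1 (Real.exp t) ∈ Ioc (0:ℝ) 1 :=
      ⟨lt_min one_pos (Real.exp_pos t), min_le_left _ _⟩
    refine (Ffun_diff hd hL hσ hRlip hR0 hR w₁ w₂ hw₁ hw₂ hmem).trans ?_
    have : ((d:ℝ) + 1) * ((L * σ⁻¹) * ρ * ‖w₁ - w₂‖)
        = (2 * (d:ℝ) * ((d:ℝ)+1) * (L * σ⁻¹) * m) * ‖w₁ - w₂‖ := by
      rw [hρdef]; ring
    rw [this]
    apply mul_le_mul_of_nonneg_right hsmall (norm_nonneg _)
  -- set up the fixed point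
  set S : Set (BoundedContinuousFunction ℝ ℝ) := Metric.closedBall 0 ρ with hS
  haveI : CompleteSpace S := (Metric.isClosed_closedBall).completeSpace_coe
  haveI : Nonempty S := ⟨⟨0, Metric.mem_closedBall_self hρpos.le⟩⟩
  have hmemS : ∀ w : BoundedContinuousFunction ℝ ℝ, w ∈ S ↔ ‖w‖ ≤ ρ := by
    intro w
    rw [hS, Metric.mem_closedBall, dist_zero_right]
  set Φ : S → S := fun w => ⟨Tbcf d σ R m L hd hL hσ hRlip hR0 w.1,
    (hmemS _).2 (hinv w.1 ((hmemS _).1 w.2))⟩ with hΦdef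
  have hcontr : ContractingWith (1/2 : NNReal) Φ := by
    constructor
    · rw [← NNReal.coe_lt_coe]
      norm_num
    · apply LipschitzWith.of_dist_le_mul
      intro x y
      rw [Subtype.dist_eq]
      have := hlip x.1 y.1 ((hmemS _).1 x.2) ((hmemS _).1 y.2)
      simpa [Subtype.dist_eq] using this
  set wfix : S := ContractingWith.fixedPoint Φ hcontr with hwfixdef
  have hfixpt : Φ wfix = wfix := ContractingWith.fixedPoint_isFixedPt hcontr
  set wb : BoundedContinuousFunction ℝ ℝ := wfix.1 with hwbdef
  have hwρ : ‖wb‖ ≤ ρ := (hmemS _).1 wfix.2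
  have hfix : Tbcf d σ R m L hd hL hσ hRlip hR0 wb = wb := congrArg Subtype.val hfixpt
  have hfixr : ∀ r ∈ Ioc (0:ℝ) 1, wb (Real.log r) = Ffun d σ R m wb r := by
    intro r hr
    have := congrFun (congrArg DFunLike.coe hfix) (Real.log r)
    rw [Tbcf_apply] at this
    rw [← this, Real.exp_log hr.1, min_eq_right hr.2]
  -- the solution
  set c : ℝ := m - Jfun d σ R wb with hcdef
  refine ⟨Qfun d wb, fun r => r ^ (d-3) * wb (Real.log r),
    fun r => (d - 1) * r⁻¹ * (r ^ (d-3) * wb (Real.log r))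
      - R ((r ^ (d-3) * wb (Real.log r)) * r ^ ((1:ℝ) - d) * σ⁻¹) * Qfun d wb r,
    ?_, ?_, ?_, ?_, ?_, ?_, ?_, ?_⟩
  · -- HasDerivAt Q
    intro r hr
    simpa [gfun] using Qfun_hasDeriv wb hr.1
  · -- ContinuousOn Q'
    exact (contOn_g wb).mono (fun x hx => hx.1)
  · -- weighted bounds
    refine ⟨ρ, fun r hr => ⟨?_, ?_⟩⟩
    · rw [show ((2:ℝ) - d) = ((2:ℕ):ℝ) - d by norm_num,
        rpow_sub_nat hr.1 2 d (by omega), abs_mul,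
        abs_of_nonneg (inv_nonneg.2 (pow_nonneg hr.1.le _))]
      calc |Qfun d wb r| * (r ^ (d-2))⁻¹ ≤ ‖wb‖ * r ^ (d-2) * (r ^ (d-2))⁻¹ := by
            exact mul_le_mul_of_nonneg_right (Qfun_bound hd wb hr.1 hr.2)
              (inv_nonneg.2 (pow_nonneg hr.1.le _))
        _ = ‖wb‖ := by
            rw [mul_assoc, mul_inv_cancel₀ (pow_ne_zero _ (ne_of_gt hr.1)), mul_one]
        _ ≤ ρ := hwρ
    · show |r ^ (d-3) * wb (Real.log r) * r ^ ((3:ℝ) - d)| ≤ ρ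
      rw [show ((3:ℝ) - d) = ((3:ℕ):ℝ) - d by norm_num, rpow_sub_nat hr.1 3 d hd]
      have : r ^ (d-3) * wb (Real.log r) * (r ^ (d-3))⁻¹ = wb (Real.log r) := by
        rw [mul_comm (r ^ (d-3)) _, mul_assoc,
          mul_inv_cancel₀ (pow_ne_zero _ (ne_of_gt hr.1)), mul_one]
      rw [this]
      exact (wb.norm_coe_le_norm _).trans hwρ
  · -- ContinuousOn Q
    exact (Qfun_cont wb).continuousOn
  · -- Q 0 = 0
    simp [Qfun]
  · -- Q 1 = m
    have hstep : ∀ t ∈ Ι (0:ℝ) 1,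
        gfun d wb t = (d:ℝ) * c * t^(d-1) + t^(d-1) * Ifun d σ R wb t := by
      intro t ht
      rw [uIoc_of_le zero_le_one] at ht
      have h1 := hfixr t ht
      rw [gfun, h1, Ffun]
      have hpow : t ^ (d-3) * t^2 = t^(d-1) := by rw [← pow_add]; congr 1; omega
      have h2 : t ^ (d-3) * ((d:ℝ) * (m - Jfun d σ R wb) * t^2 + t^2 * Ifun d σ R wb t)
          = (d:ℝ) * (m - Jfun d σ R wb) * (t^(d-3) * t^2)
            + (t^(d-3) * t^2) * Ifun d σ R wb t := by ring
      rw [h2, hpow, hcdef]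
    have hint1 : IntervalIntegrable (fun t : ℝ => (d:ℝ) * c * t^(d-1)) volume 0 1 :=
      (continuous_const.mul (continuous_pow _)).intervalIntegrable _ _
    have hint2 := intInt_J hd hL hσ hRlip hR0 wb hR
    have hd1 : ((d - 1 : ℕ) : ℝ) + 1 = (d : ℝ) := by
      push_cast [Nat.cast_sub (by omega : 1 ≤ d)]
      ring
    have hQ1 : Qfun d wb 1
        = ∫ t in (0:ℝ)..1, ((d:ℝ) * c * t^(d-1) + t^(d-1) * Ifun d σ R wb t) := by
      rw [Qfun]
      exact intervalIntegral.integral_congr_ae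
        (Filter.Eventually.of_forall (fun t ht => hstep t ht))
    rw [hQ1, intervalIntegral.integral_add hint1 hint2]
    have hfirst : (∫ t in (0:ℝ)..1, (d:ℝ) * c * t^(d-1)) = c := by
      rw [intervalIntegral.integral_const_mul, integral_pow]
      have h01 : (1:ℝ) ^ (d - 1 + 1) - 0 ^ (d - 1 + 1) = 1 := by
        rw [one_pow, zero_pow (by omega), sub_zero]
      rw [h01, hd1]
      field_simp
    rw [hfirst]
    have hsecond : (∫ t in (0:ℝ)..1, t^(d-1) * Ifun d σ R wb t) = Jfun d σ R wb := by
      rw [Jfun]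
    rw [hsecond, hcdef]
    ring
  · -- HasDerivAt Q'
    intro r hr
    have hr0 : 0 < r := hr.1
    set φ : ℝ → ℝ := fun u => (d:ℝ) * c * u^(d-1) + u^(d-1) * Ifun d σ R wb u with hφ
    have heq : EqOn (fun u : ℝ => u ^ (d-3) * wb (Real.log u)) φ (Ioo (0:ℝ) 1) := by
      intro u hu
      have h1 := hfixr u ⟨hu.1, hu.2.le⟩
      simp only
      rw [h1, Ffun, hφ]
      have hpow : u ^ (d-3) * u^2 = u^(d-1) := by rw [← pow_add]; congr 1; omega
      have h2 : u ^ (d-3) * ((d:ℝ) * (m - Jfun d σ R wb) * u^2 + u^2 * Ifun d σ R wb u)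
          = (d:ℝ) * (m - Jfun d σ R wb) * (u^(d-3) * u^2)
            + (u^(d-3) * u^2) * Ifun d σ R wb u := by ring
      rw [h2, hpow, hcdef]
    have hev : (fun u : ℝ => u ^ (d-3) * wb (Real.log u)) =ᶠ[nhds r] φ :=
      Filter.eventuallyEq_of_mem (Ioo_mem_nhds hr.1 hr.2) heq
    have hIder := Ifun_hasDeriv (d := d) (σ := σ) wb hR hr0
    have hp : HasDerivAt (fun u : ℝ => u ^ (d-1)) (((d-1:ℕ):ℝ) * r^(d-2)) r := by
      have h := hasDerivAt_pow (d-1) r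
      rw [show d-1-1 = d-2 by omega] at h
      exact h
    have hφ' : HasDerivAt φ ((d:ℝ) * c * (((d-1:ℕ):ℝ) * r^(d-2))
        + ((((d-1:ℕ):ℝ) * r^(d-2)) * Ifun d σ R wb r + r^(d-1) * (-(hfun d σ R wb r)))) r :=
      (hp.const_mul ((d:ℝ) * c)).add (hp.mul hIder)
    have hfinal := hφ'.congr_of_eventuallyEq hev
    refine hfinal.congr_deriv ?_
    symm
    show (d - 1) * r⁻¹ * (r ^ (d-3) * wb (Real.log r))
        - R ((r ^ (d-3) * wb (Real.log r)) * r ^ ((1:ℝ) - d) * σ⁻¹) * Qfun d wb r = _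
    have hrpow : r ^ ((1:ℝ) - (d:ℝ)) = (r ^ (d-1:ℕ))⁻¹ := by
      rw [show ((1:ℝ) - (d:ℝ)) = ((1:ℕ):ℝ) - d by norm_num, rpow_sub_nat hr0 1 d (by omega)]
    have hfracpow : r ^ (d-3) * (r ^ (d-1))⁻¹ = (r^2)⁻¹ := by
      rw [show d-1 = (d-3)+2 by omega, pow_add, mul_inv, ← mul_assoc,
        mul_inv_cancel₀ (pow_ne_zero _ hr0.ne'), one_mul]
    have harg : (r ^ (d-3) * wb (Real.log r)) * r ^ ((1:ℝ) - (d:ℝ)) * σ⁻¹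
        = wb (Real.log r) * (r^2)⁻¹ * σ⁻¹ := by
      rw [hrpow]
      have h1 : (r ^ (d-3) * wb (Real.log r)) * (r ^ (d-1))⁻¹ * σ⁻¹
          = wb (Real.log r) * (r ^ (d-3) * (r ^ (d-1))⁻¹) * σ⁻¹ := by ring
      rw [h1, hfracpow]
    have hRterm : R (wb (Real.log r) * (r^2)⁻¹ * σ⁻¹) * Qfun d wb r
        = r^(d-1) * hfun d σ R wb r := by
      rw [hfun, ← mul_assoc, mul_inv_cancel₀ (pow_ne_zero _ hr0.ne'), one_mul]
    have hQ'r : r ^ (d-3) * wb (Real.log r)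
        = (d:ℝ) * c * r^(d-1) + r^(d-1) * Ifun d σ R wb r := heq hr
    have hcast : ((d-1:ℕ):ℝ) = (d:ℝ) - 1 := by
      push_cast [Nat.cast_sub (by omega : 1 ≤ d)]
      ring
    have hsplit : r^(d-1) = r^(d-2) * r := by
      rw [← pow_succ]; congr 1; omega
    rw [harg, hRterm, hQ'r, hcast, hsplit]
    field_simp
    ring
  · -- ODE
    intro r hr
    ring
end
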